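/- arXiv:1702.07701 — 13 statements merged into one kernel-verified Lean document; each statement's English description precedes it below -/
import Mathlib

section
/- Let k be a division ring, V ⊆ k^n a left k-subspace and W ⊆ V a right k-subspace. Then the right dimension of W is at most the left dimension of V. -/
open Module

/-- Coordinate-selection lemma: for a left subspace `V` of `k^n` there is a set `S` of
at most `finrank k V` coordinates such that an element of `V` vanishing on `S` is zero. -/
lemma exists_coords {k : Type*} [DivisionRing k] {n : ℕ} :
    ∀ (d : ℕ) (V : Submodule k (Fin n → k)), finrank k V ≤ d →
      ∃ S : Finset (Fin n), S.card ≤ d ∧ ∀ x ∈ V, (∀ i ∈ S, x i = 0) → x = 0 := by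
  intro d
  induction d with
  | zero =>
    intro V hV
    refine ⟨∅, le_rfl, fun x hx _ => ?_⟩
    have : V = ⊥ := Submodule.finrank_eq_zero.mp (Nat.le_zero.mp hV)
    simpa [this] using hx
  | succ d ih =>
    intro V hV
    by_cases hb : V = ⊥
    · exact ⟨∅, Nat.zero_le _, fun x hx _ => by simpa [hb] using hx⟩
    · obtain ⟨x, hxV, hx0⟩ := Submodule.exists_mem_ne_zero_of_ne_bot hb
      obtain ⟨i, hi⟩ : ∃ i, x i ≠ 0 := by
        by_contra hc
        push_neg at hc
        exact hx0 (funext hc)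
      set V' := V ⊓ LinearMap.ker (LinearMap.proj i : (Fin n → k) →ₗ[k] k) with hV'
      have hlt : V' < V := by
        refine lt_of_le_of_ne inf_le_left ?_
        intro he
        have : x ∈ V' := he ▸ hxV
        exact hi this.2
      have hfin : finrank k V' ≤ d := by
        have := Submodule.finrank_lt_finrank_of_lt (s := V') (t := V) hlt
        omega
      obtain ⟨S', hS'c, hS'⟩ := ih V' hfin
      refine ⟨insert i S', ?_, ?_⟩
      · calc (insert i S').card ≤ S'.card + 1 := Finset.card_insert_le _ _
          _ ≤ d + 1 := by omega
      · intro y hyV hy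
        refine hS' y ⟨hyV, ?_⟩ fun j hj => hy j (Finset.mem_insert_of_mem hj)
        simpa using hy i (Finset.mem_insert_self _ _)

/-- Lemma 2 (dimleftright), inequality: a right subspace `W` contained in a left
subspace `V` has right dimension at most the left dimension of `V`. -/
theorem stmt_1 {k : Type*} [DivisionRing k] {n : ℕ}
    (V : Submodule k (Fin n → k)) (W : Submodule kᵐᵒᵖ (Fin n → k))
    (h : (W : Set (Fin n → k)) ⊆ (V : Set (Fin n → k))) :
    Module.finrank kᵐᵒᵖ W ≤ Module.finrank k V := by
  obtain ⟨S, hScard, hS⟩ := exists_coords (finrank k V) V le_rfl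
  -- right-linear projection W → (S → k)
  let f : W →ₗ[kᵐᵒᵖ] (S → k) :=
    { toFun := fun w j => (w : Fin n → k) j
      map_add' := fun a b => rfl
      map_smul' := fun c a => rfl }
  have hf : Function.Injective f := by
    intro a b hab
    ext j
    have key : ((a : Fin n → k) - b) = 0 := by
      refine hS _ (V.sub_mem (h a.2) (h b.2)) fun i hi => ?_
      have := congrFun hab ⟨i, hi⟩
      simpa [f, sub_eq_zero] using this
    have := congrFun key j
    simpa [sub_eq_zero] using this
  have e : (S → k) ≃ₗ[kᵐᵒᵖ] (↥S → kᵐᵒᵖ) :=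
    LinearEquiv.piCongrRight fun _ => MulOpposite.opLinearEquiv kᵐᵒᵖ
  have hfd : FiniteDimensional kᵐᵒᵖ (S → k) := Module.Finite.equiv e.symm
  calc finrank kᵐᵒᵖ W ≤ finrank kᵐᵒᵖ (S → k) := LinearMap.finrank_le_finrank_of_injective hf
    _ = finrank kᵐᵒᵖ (↥S → kᵐᵒᵖ) := e.finrank_eq
    _ = S.card := by rw [Module.finrank_pi]; simp
    _ ≤ finrank k V := hScard
end

section
/- Let k be a division ring, V ⊆ k^n a left k-subspace and W ⊊ V a right k-subspace which is properly contained in V. Then the right dimension of W is strictly less than the left dimension of V. -/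
open Module MulOpposite

set_option synthInstance.maxHeartbeats 1000000
set_option maxHeartbeats 2000000

private instance aux_fin {k : Type*} [DivisionRing k] : Module.Finite kᵐᵒᵖ k :=
  Module.Finite.equiv (opLinearEquiv kᵐᵒᵖ).symm

private theorem aux_finrank_op {k : Type*} [DivisionRing k] : finrank kᵐᵒᵖ k = 1 := by
  rw [(opLinearEquiv kᵐᵒᵖ : k ≃ₗ[kᵐᵒᵖ] kᵐᵒᵖ).finrank_eq, finrank_self]

private theorem aux_key {k : Type*} [DivisionRing k] {n : ℕ} :
    ∀ d (V : Submodule k (Fin n → k)) (W : Submodule kᵐᵒᵖ (Fin n → k)),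
      finrank k V ≤ d → (W : Set (Fin n → k)) ⊂ (V : Set (Fin n → k)) →
      finrank kᵐᵒᵖ W < finrank k V := by
  intro d
  induction d with
  | zero =>
    intro V W hd h
    exfalso
    have h0 : (0 : Fin n → k) ∈ (W : Set (Fin n → k)) := W.zero_mem
    have hV : V = ⊥ := Submodule.finrank_eq_zero.mp (Nat.le_zero.mp hd)
    have := h.1 h0
    obtain ⟨v, hv, hvW⟩ := Set.exists_of_ssubset h
    rw [hV] at hv
    simp only [Submodule.bot_coe, Set.mem_singleton_iff] at hv
    subst hv
    exact hvW h0
  | succ d ih =>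
    intro V W hd h
    by_cases hW : W = ⊥
    · subst hW
      have hVnb : V ≠ ⊥ := by
        obtain ⟨v, hv, hvW⟩ := Set.exists_of_ssubset h
        intro hb
        rw [hb] at hv
        simp only [Submodule.bot_coe, Set.mem_singleton_iff] at hv
        exact hvW (by simp [hv])
      have : Nontrivial V := Submodule.nontrivial_iff_ne_bot.2 hVnb
      simpa [finrank_bot] using Module.finrank_pos (R := k) (M := V)
    · obtain ⟨w, hwW, hw0⟩ := Submodule.exists_mem_ne_zero_of_ne_bot hW
      obtain ⟨i, hi⟩ : ∃ i, w i ≠ 0 := Function.ne_iff.1 hw0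
      have hwV : w ∈ (V : Set (Fin n → k)) := h.1 hwW
      set π : (Fin n → k) →ₗ[k] k := LinearMap.proj i with hπ
      set π' : (Fin n → k) →ₗ[kᵐᵒᵖ] k := LinearMap.proj i with hπ'
      set fV : V →ₗ[k] k := π.comp V.subtype with hfV
      set fW : W →ₗ[kᵐᵒᵖ] k := π'.comp W.subtype with hfW
      -- surjectivity of both restricted projections
      have hVsurj : ∀ y : k, ∃ v ∈ V, v i = y := by
        intro y
        exact ⟨(y * (w i)⁻¹) • w, V.smul_mem _ hwV, by
          simp [inv_mul_cancel₀ hi, mul_assoc]⟩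
      have hWsurj : ∀ y : k, ∃ u ∈ W, u i = y := by
        intro y
        refine ⟨(op ((w i)⁻¹ * y)) • w, W.smul_mem _ hwW, ?_⟩
        show w i * ((w i)⁻¹ * y) = y
        rw [← mul_assoc, mul_inv_cancel₀ hi, one_mul]
      have hrV : LinearMap.range fV = ⊤ := by
        rw [eq_top_iff]
        intro y _
        obtain ⟨v, hv, hvi⟩ := hVsurj y
        exact ⟨⟨v, hv⟩, hvi⟩
      have hrW : LinearMap.range fW = ⊤ := by
        rw [eq_top_iff]
        intro y _
        obtain ⟨u, hu, hui⟩ := hWsurj y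
        exact ⟨⟨u, hu⟩, hui⟩
      set V₁ : Submodule k (Fin n → k) := V ⊓ LinearMap.ker π with hV₁
      set W₁ : Submodule kᵐᵒᵖ (Fin n → k) := W ⊓ LinearMap.ker π' with hW₁
      -- finrank identities via rank-nullity
      have hkV : finrank k (LinearMap.ker fV) = finrank k V₁ := by
        have h1 : LinearMap.ker fV = Submodule.comap V.subtype V₁ := by
          rw [hfV, LinearMap.ker_comp, hV₁, Submodule.comap_inf,
            Submodule.comap_subtype_self, top_inf_eq]
        rw [h1]
        exact (Submodule.comapSubtypeEquivOfLe (inf_le_left : V₁ ≤ V)).finrank_eq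
      have hkW : finrank kᵐᵒᵖ (LinearMap.ker fW) = finrank kᵐᵒᵖ W₁ := by
        have h1 : LinearMap.ker fW = Submodule.comap W.subtype W₁ := by
          rw [hfW, LinearMap.ker_comp, hW₁, Submodule.comap_inf,
            Submodule.comap_subtype_self, top_inf_eq]
        rw [h1]
        exact (Submodule.comapSubtypeEquivOfLe (inf_le_left : W₁ ≤ W)).finrank_eq
      have hdimV : finrank k V = finrank k V₁ + 1 := by
        have := LinearMap.finrank_range_add_finrank_ker fV
        rw [hrV, finrank_top, finrank_self, hkV] at this
        omega
      have hdimW : finrank kᵐᵒᵖ W = finrank kᵐᵒᵖ W₁ + 1 := by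
        have := LinearMap.finrank_range_add_finrank_ker fW
        rw [hrW, finrank_top, aux_finrank_op, hkW] at this
        omega
      -- strict inclusion of the cut subspaces
      have hsub : (W₁ : Set (Fin n → k)) ⊂ (V₁ : Set (Fin n → k)) := by
        constructor
        · intro x hx
          obtain ⟨hx1, hx2⟩ := hx
          exact ⟨h.1 hx1, hx2⟩
        · intro hcon
          obtain ⟨v, hv, hvW⟩ := Set.exists_of_ssubset h
          obtain ⟨u, hu, hui⟩ := hWsurj (v i)
          have hvu : v - u ∈ (V₁ : Set (Fin n → k)) := by
            refine ⟨V.sub_mem hv (h.1 hu), ?_⟩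
            show (v - u) i = 0
            simp [hui]
          have : v - u ∈ W₁ := hcon hvu
          have : v - u ∈ W := this.1
          have : v ∈ W := by
            have := W.add_mem hu this
            simpa using this
          exact hvW this
      have hle : finrank k V₁ ≤ d := by omega
      have := ih V₁ W₁ hle hsub
      omega

/-- Lemma 2 (dimleftright), strict case: a right subspace `W` properly contained in a
left subspace `V` has right dimension strictly less than the left dimension of `V`. -/
theorem stmt_2 {k : Type*} [DivisionRing k] {n : ℕ}
    (V : Submodule k (Fin n → k)) (W : Submodule kᵐᵒᵖ (Fin n → k))
    (h : (W : Set (Fin n → k)) ⊂ (V : Set (Fin n → k))) :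
    Module.finrank kᵐᵒᵖ W < Module.finrank k V := by
  exact aux_key (finrank k V) V W le_rfl h
end

section
/- Let k be a division ring and f : k^n → k^n an injective map such that the image of every left or right affine subspace is a left or right affine subspace. Then f is bijective and for every left or right affine subspace A, the dimension of f(A) equals the dimension of A. -/
open Function Set

variable {k : Type*}

/-- A set is a left `k`-subspace of `k^n`. -/
def IsLeftSub [DivisionRing k] {n : ℕ} (A : Set (Fin n → k)) : Prop :=
  ∃ S : Submodule k (Fin n → k), A = (S : Set (Fin n → k))

/-- A set is a right `k`-subspace of `k^n` (right modules encoded via `kᵐᵒᵖ`). -/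
def IsRightSub [DivisionRing k] {n : ℕ} (A : Set (Fin n → k)) : Prop :=
  ∃ S : Submodule kᵐᵒᵖ (Fin n → k), A = (S : Set (Fin n → k))

/-- A set is a left affine subspace of `k^n`: a translate of a left subspace. -/
def IsLeftAff [DivisionRing k] {n : ℕ} (A : Set (Fin n → k)) : Prop :=
  ∃ (v : Fin n → k) (S : Submodule k (Fin n → k)), A = (v + ·) '' (S : Set (Fin n → k))

/-- A set is a right affine subspace of `k^n`: a translate of a right subspace. -/
def IsRightAff [DivisionRing k] {n : ℕ} (A : Set (Fin n → k)) : Prop :=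
  ∃ (v : Fin n → k) (S : Submodule kᵐᵒᵖ (Fin n → k)), A = (v + ·) '' (S : Set (Fin n → k))

/-- `A` is a left affine subspace of dimension `d`. -/
def HasDimL [DivisionRing k] {n : ℕ} (A : Set (Fin n → k)) (d : ℕ) : Prop :=
  ∃ (v : Fin n → k) (S : Submodule k (Fin n → k)),
    A = (v + ·) '' (S : Set (Fin n → k)) ∧ Module.finrank k S = d

/-- `A` is a right affine subspace of dimension `d`. -/
def HasDimR [DivisionRing k] {n : ℕ} (A : Set (Fin n → k)) (d : ℕ) : Prop :=
  ∃ (v : Fin n → k) (S : Submodule kᵐᵒᵖ (Fin n → k)),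
    A = (v + ·) '' (S : Set (Fin n → k)) ∧ Module.finrank kᵐᵒᵖ S = d


/-!
Dimension is strictly monotone along inclusions of affine subspaces, even when left and right
subspaces are mixed. If a left subspace `B` lies in a right subspace `T`, pick a set of coordinate
vectors spanning a complement `C` of `B`; the same coordinates span `C` as a right subspace, of the
same dimension, and `T + C = kⁿ` gives `dim B ≤ dim T`, with equality forcing `T ∩ C = 0`, i.e.
`T = B`. Since `f` is injective it preserves strict inclusions, so a descending chain below `A`
gives `dim f(A) ≥ dim A`, an ascending chain from `A` up to `kⁿ` gives `dim f(A) ≤ dim A`, and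
`f(kⁿ)`, being `n`-dimensional, is all of `kⁿ`.
-/

open Module Submodule

section TwoModuleStructures

variable {V : Type*} [AddCommGroup V]

theorem AddSubgroup.le_of_image_add_subset {G H : AddSubgroup V} {v w : V}
    (h : (v + ·) '' (G : Set V) ⊆ (w + ·) '' H) : G ≤ H := by
  have mem_H {x} (hx : x ∈ G) : v + x - w ∈ H := by
    obtain ⟨y, hy, hyx⟩ := h ⟨x, hx, rfl⟩
    simpa [← hyx] using hy
  intro x hx
  simpa using sub_mem (mem_H hx) (mem_H G.zero_mem)

theorem AddSubgroup.image_add_eq_of_subset {G : AddSubgroup V} {v w : V}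
    (h : (v + ·) '' (G : Set V) ⊆ (w + ·) '' G) : (v + ·) '' (G : Set V) = (w + ·) '' G := by
  obtain ⟨u, hu, hwu⟩ := h ⟨0, G.zero_mem, rfl⟩
  refine h.antisymm ?_
  rintro _ ⟨x, hx, rfl⟩
  exact ⟨x - u, sub_mem hx hu, by simp only [add_zero] at hwu ⊢; rw [← hwu]; abel⟩

variable {ι R S : Type*} [DivisionRing R] [DivisionRing S] [Module R V] [Module S V]

theorem Module.Basis.exists_isCompl_span_image (b : Basis ι R V) (p : Submodule R V) :
    ∃ J : Set ι, IsCompl p (span R (b '' J)) := by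
  -- `J` indexes basis vectors whose images form a basis of `V ⧸ p`.
  obtain ⟨J, -, -, hspan, hJ⟩ := exists_linearIndepOn_extension (v := p.mkQ ∘ b)
    (linearIndepOn_empty R _) (Set.empty_subset Set.univ)
  refine ⟨J, ?_, ?_⟩
  · rw [disjoint_def]
    intro x hxp hxJ
    obtain ⟨l, hl, rfl⟩ := (Finsupp.mem_span_image_iff_linearCombination R).mp hxJ
    have : Finsupp.linearCombination R (p.mkQ ∘ b) l = 0 := by
      rw [← Finsupp.apply_linearCombination, mkQ_apply, Quotient.mk_eq_zero]
      exact hxp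
    simp [linearIndepOn_iff.mp hJ l hl this]
  · rw [codisjoint_iff, ← map_mkQ_eq_top, map_span, ← Set.image_comp, eq_top_iff]
    calc (⊤ : Submodule R (V ⧸ p)) = span R (Set.range (p.mkQ ∘ b)) := by
          rw [Set.range_comp, ← map_span, b.span_eq, Submodule.map_top, range_mkQ]
      _ ≤ _ := span_le.mpr (by simpa using hspan)

theorem Module.Basis.finrank_span_image [Finite ι] (b : Basis ι R V) (J : Set ι) :
    finrank R (span R (b '' J)) = Nat.card J := by
  have := Fintype.ofFinite J
  rw [Set.image_eq_range, Nat.card_eq_fintype_card]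
  exact finrank_span_eq_card (b.linearIndependent.comp _ Subtype.val_injective)

theorem Module.Basis.coe_span_image_eq (b₁ : Basis ι R V) (b₂ : Basis ι S V)
    (hb : ∀ x, (b₁.repr x).support = (b₂.repr x).support) (J : Set ι) :
    (span R (b₁ '' J) : Set V) = span S (b₂ '' J) := by
  ext x
  simp only [SetLike.mem_coe, Basis.mem_span_image, hb]

theorem finrank_le_finrank_of_coe_subset_of_isCompl [FiniteDimensional R V]
    [FiniteDimensional S V] (hV : finrank R V = finrank S V) {B C : Submodule R V}
    {T C' : Submodule S V} (hcoe : (C : Set V) = C') (hfinrank : finrank R C = finrank S C')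
    (hBC : IsCompl B C) (hBT : (B : Set V) ⊆ T) :
    finrank R B ≤ finrank S T ∧ (finrank R B = finrank S T → (B : Set V) = T) := by
  have decomp (x : V) : ∃ b ∈ B, ∃ c ∈ C', b + c = x := by
    obtain ⟨b, hb, c, hc, hbc⟩ := mem_sup.mp (hBC.sup_eq_top ▸ mem_top : x ∈ B ⊔ C)
    exact ⟨b, hb, c, by rwa [← SetLike.mem_coe, ← hcoe], hbc⟩
  have hsup : T ⊔ C' = ⊤ := eq_top_iff'.mpr fun x => by
    obtain ⟨b, hb, c, hc, rfl⟩ := decomp x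
    exact add_mem (mem_sup_left (hBT hb)) (mem_sup_right hc)
  have hB := finrank_add_eq_of_isCompl hBC
  have hT := finrank_sup_add_finrank_inf_eq T C'
  rw [hsup, finrank_top] at hT
  refine ⟨by omega, fun hBT_eq => hBT.antisymm fun t ht => ?_⟩
  have hTC' : T ⊓ C' = ⊥ := finrank_eq_zero.mp (by omega)
  obtain ⟨b, hb, c, hc, rfl⟩ := decomp t
  have hc0 : c ∈ T ⊓ C' := ⟨by simpa using sub_mem ht (hBT hb), hc⟩
  rw [hTC', mem_bot] at hc0
  simpa [hc0] using hb

theorem Module.Basis.finrank_le_finrank_of_coe_subset [Finite ι] (b₁ : Basis ι R V)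
    (b₂ : Basis ι S V) (hb : ∀ x, (b₁.repr x).support = (b₂.repr x).support)
    {B : Submodule R V} {T : Submodule S V} (hBT : (B : Set V) ⊆ T) :
    finrank R B ≤ finrank S T ∧ (finrank R B = finrank S T → (B : Set V) = T) := by
  have := b₁.finiteDimensional_of_finite
  have := b₂.finiteDimensional_of_finite
  obtain ⟨J, hJ⟩ := b₁.exists_isCompl_span_image B
  refine finrank_le_finrank_of_coe_subset_of_isCompl ?_ (b₁.coe_span_image_eq b₂ hb J) ?_ hJ hBT
  · rw [finrank_eq_nat_card_basis b₁, finrank_eq_nat_card_basis b₂]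
  · rw [b₁.finrank_span_image, b₂.finrank_span_image]

theorem Module.Basis.finrank_le_finrank_of_image_add_subset [Finite ι] (b₁ : Basis ι R V)
    (b₂ : Basis ι S V) (hb : ∀ x, (b₁.repr x).support = (b₂.repr x).support)
    {B : Submodule R V} {T : Submodule S V} {v w : V}
    (h : (v + ·) '' (B : Set V) ⊆ (w + ·) '' T) :
    finrank R B ≤ finrank S T ∧
      (finrank R B = finrank S T → (v + ·) '' (B : Set V) = (w + ·) '' T) := by
  have hBT : (B : Set V) ⊆ T :=
    AddSubgroup.le_of_image_add_subset (G := B.toAddSubgroup) (H := T.toAddSubgroup) h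
  refine ⟨(b₁.finrank_le_finrank_of_coe_subset b₂ hb hBT).1, fun he => ?_⟩
  rw [(b₁.finrank_le_finrank_of_coe_subset b₂ hb hBT).2 he] at h ⊢
  exact AddSubgroup.image_add_eq_of_subset (G := T.toAddSubgroup) h

end TwoModuleStructures

section DivisionRing

variable {K V : Type*} [DivisionRing K] [AddCommGroup V] [Module K V]

theorem Submodule.exists_lt_finrank_eq {S : Submodule K V} {d : ℕ} (h : finrank K S = d + 1) :
    ∃ S' < S, finrank K S' = d := by
  obtain ⟨f, hf⟩ := exists_linearIndependent_of_le_finrank (R := K) (M := S) (n := d) (by omega)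
  have hS' : finrank K (span K (Set.range (S.subtype ∘ f))) = d := by
    simpa using finrank_span_eq_card (hf.map' S.subtype S.ker_subtype)
  refine ⟨_, lt_of_le_of_ne (span_le.mpr ?_) fun he => ?_, hS'⟩
  · rintro _ ⟨i, rfl⟩
    exact (f i).2
  · rw [he] at hS'
    omega

theorem Submodule.exists_gt_finrank_eq [FiniteDimensional K V] {S : Submodule K V}
    (h : finrank K S < finrank K V) : ∃ S' > S, finrank K S' = finrank K S + 1 := by
  obtain ⟨x, -, hx⟩ := SetLike.exists_of_lt (lt_top_of_finrank_lt_finrank h)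
  exact ⟨S ⊔ span K {x}, left_lt_sup.mpr (by rwa [span_singleton_le_iff_mem]),
    finrank_sup_span_singleton hx⟩

end DivisionRing

section Coordinates

variable (k) [DivisionRing k] (n : ℕ)

noncomputable def rightBasis : Basis (Fin n) kᵐᵒᵖ (Fin n → k) :=
  .ofEquivFun (LinearEquiv.piCongrRight fun _ => MulOpposite.opLinearEquiv kᵐᵒᵖ)

instance : FiniteDimensional kᵐᵒᵖ (Fin n → k) :=
  (rightBasis k n).finiteDimensional_of_finite

theorem finrank_mulOpposite_fin_fun : finrank kᵐᵒᵖ (Fin n → k) = n := by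
  simp [finrank_eq_card_basis (rightBasis k n)]

variable {k n}

theorem support_basisFun_repr_eq (x : Fin n → k) :
    ((Pi.basisFun k (Fin n)).repr x).support = ((rightBasis k n).repr x).support := by
  ext i
  simp [rightBasis]

end Coordinates

section AffineDimension

variable [DivisionRing k] {n : ℕ}

def HasDim (A : Set (Fin n → k)) (d : ℕ) : Prop :=
  HasDimL A d ∨ HasDimR A d

theorem HasDim.isAff {A : Set (Fin n → k)} {d : ℕ} (hA : HasDim A d) :
    IsLeftAff A ∨ IsRightAff A := by
  rcases hA with ⟨v, S, hA, -⟩ | ⟨v, S, hA, -⟩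
  exacts [Or.inl ⟨v, S, hA⟩, Or.inr ⟨v, S, hA⟩]

theorem exists_hasDim_of_isAff {A : Set (Fin n → k)} (hA : IsLeftAff A ∨ IsRightAff A) :
    ∃ d, HasDim A d := by
  rcases hA with ⟨v, S, hA⟩ | ⟨v, S, hA⟩
  exacts [⟨_, Or.inl ⟨v, S, hA, rfl⟩⟩, ⟨_, Or.inr ⟨v, S, hA, rfl⟩⟩]

theorem hasDim_univ : HasDim (univ : Set (Fin n → k)) n :=
  Or.inl ⟨0, ⊤, by simp, by simp⟩

theorem HasDim.le_and_eq_of_subset {A B : Set (Fin n → k)} {d e : ℕ} (hA : HasDim A d)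
    (hB : HasDim B e) (h : A ⊆ B) : d ≤ e ∧ (d = e → A = B) := by
  have hLR := support_basisFun_repr_eq (k := k) (n := n)
  rcases hA with ⟨v, S, rfl, rfl⟩ | ⟨v, S, rfl, rfl⟩ <;>
    rcases hB with ⟨w, T, rfl, rfl⟩ | ⟨w, T, rfl, rfl⟩
  · exact (Pi.basisFun k _).finrank_le_finrank_of_image_add_subset _ (fun _ => rfl) h
  · exact (Pi.basisFun k _).finrank_le_finrank_of_image_add_subset _ hLR h
  · exact (rightBasis k n).finrank_le_finrank_of_image_add_subset _ (fun x => (hLR x).symm) h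
  · exact (rightBasis k n).finrank_le_finrank_of_image_add_subset _ (fun _ => rfl) h

theorem HasDim.le_of_subset {A B : Set (Fin n → k)} {d e : ℕ} (hA : HasDim A d)
    (hB : HasDim B e) (h : A ⊆ B) : d ≤ e :=
  (hA.le_and_eq_of_subset hB h).1

theorem HasDim.lt_of_ssubset {A B : Set (Fin n → k)} {d e : ℕ} (hA : HasDim A d)
    (hB : HasDim B e) (h : A ⊂ B) : d < e :=
  have ⟨hle, heq⟩ := hA.le_and_eq_of_subset hB h.subset
  lt_of_le_of_ne hle fun hde => h.ne (heq hde)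

theorem HasDim.exists_ssubset {A : Set (Fin n → k)} {d : ℕ} (hA : HasDim A (d + 1)) :
    ∃ A' ⊂ A, HasDim A' d := by
  rcases hA with ⟨v, S, rfl, hS⟩ | ⟨v, S, rfl, hS⟩
  · obtain ⟨S', hS'S, hS'⟩ := S.exists_lt_finrank_eq hS
    exact ⟨_, (add_right_injective v).image_strictMono (SetLike.coe_strictMono hS'S),
      Or.inl ⟨v, S', rfl, hS'⟩⟩
  · obtain ⟨S', hS'S, hS'⟩ := S.exists_lt_finrank_eq hS
    exact ⟨_, (add_right_injective v).image_strictMono (SetLike.coe_strictMono hS'S),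
      Or.inr ⟨v, S', rfl, hS'⟩⟩

theorem HasDim.exists_ssuperset {A : Set (Fin n → k)} {d : ℕ} (hA : HasDim A d) (hd : d < n) :
    ∃ A', A ⊂ A' ∧ HasDim A' (d + 1) := by
  rcases hA with ⟨v, S, rfl, rfl⟩ | ⟨v, S, rfl, rfl⟩
  · obtain ⟨S', hSS', hS'⟩ := S.exists_gt_finrank_eq (by rwa [finrank_fin_fun])
    exact ⟨_, (add_right_injective v).image_strictMono (SetLike.coe_strictMono hSS'),
      Or.inl ⟨v, S', rfl, hS'⟩⟩
  · obtain ⟨S', hSS', hS'⟩ := S.exists_gt_finrank_eq (by rwa [finrank_mulOpposite_fin_fun])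
    exact ⟨_, (add_right_injective v).image_strictMono (SetLike.coe_strictMono hSS'),
      Or.inr ⟨v, S', rfl, hS'⟩⟩

variable {f : (Fin n → k) → (Fin n → k)}

theorem HasDim.le_of_hasDim_image (hinj : Injective f)
    (hf : ∀ A : Set (Fin n → k), (IsLeftAff A ∨ IsRightAff A) →
      (IsLeftAff (f '' A) ∨ IsRightAff (f '' A)))
    {A : Set (Fin n → k)} {d e : ℕ} (hA : HasDim A d) (hfA : HasDim (f '' A) e) : d ≤ e := by
  induction d generalizing A e with
  | zero => exact e.zero_le
  | succ d ih =>
    obtain ⟨A', hA'A, hA'⟩ := hA.exists_ssubset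
    obtain ⟨e', hfA'⟩ := exists_hasDim_of_isAff (hf A' hA'.isAff)
    have := ih hA' hfA'
    have := hfA'.lt_of_ssubset hfA (hinj.image_strictMono hA'A)
    omega

theorem HasDim.ge_of_hasDim_image (hinj : Injective f)
    (hf : ∀ A : Set (Fin n → k), (IsLeftAff A ∨ IsRightAff A) →
      (IsLeftAff (f '' A) ∨ IsRightAff (f '' A)))
    {A : Set (Fin n → k)} {d e : ℕ} (hA : HasDim A d) (hfA : HasDim (f '' A) e) : e ≤ d := by
  induction hm : n - d generalizing A d e with
  | zero =>
    have := hfA.le_of_subset hasDim_univ (subset_univ _)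
    omega
  | succ m ih =>
    obtain ⟨A', hAA', hA'⟩ := hA.exists_ssuperset (by omega)
    obtain ⟨e', hfA'⟩ := exists_hasDim_of_isAff (hf A' hA'.isAff)
    have := ih hA' hfA' (by omega)
    have := hfA.lt_of_ssubset hfA' (hinj.image_strictMono hAA')
    omega

end AffineDimension

/-- Part (1) of the main theorem: an injective map taking every left or right affine
subspace to a left or right affine subspace is bijective and preserves dimensions. -/
theorem stmt_4 [DivisionRing k] {n : ℕ} (f : (Fin n → k) → (Fin n → k))
    (hinj : Function.Injective f)
    (hf : ∀ A : Set (Fin n → k), (IsLeftAff A ∨ IsRightAff A) →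
      (IsLeftAff (f '' A) ∨ IsRightAff (f '' A))) :
    Function.Bijective f ∧
      ∀ (A : Set (Fin n → k)) (d : ℕ),
        (HasDimL A d ∨ HasDimR A d) → (HasDimL (f '' A) d ∨ HasDimR (f '' A) d) := by
  have hdim {A : Set (Fin n → k)} {d : ℕ} (hA : HasDim A d) : HasDim (f '' A) d := by
    obtain ⟨e, hfA⟩ := exists_hasDim_of_isAff (hf A hA.isAff)
    obtain rfl : e = d :=
      le_antisymm (hA.ge_of_hasDim_image hinj hf hfA) (hA.le_of_hasDim_image hinj hf hfA)
    exact hfA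
  have himage_univ : f '' univ = univ :=
    ((hdim hasDim_univ).le_and_eq_of_subset hasDim_univ (subset_univ _)).2 rfl
  rw [image_univ, range_eq_univ] at himage_univ
  exact ⟨⟨hinj, himage_univ⟩, fun A d hA => hdim hA⟩
end

section
/- Let k be a division ring. An affine subspace A ⊆ k^n (left or right) is two-sided if and only if for every affine line L ⊆ k^n (left or right), the intersection A ∩ L is empty, a single point, or all of L. -/
open Function Set

variable {k : Type*}

section Aux

variable {K V : Type*} [DivisionRing K] [AddCommGroup V] [Module K V]

/-- An affine subspace contains the "line through" any two of its points. -/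
lemma aff_mem_comb {A : Set V}
    (hA : ∃ (v : V) (S : Submodule K V), A = (v + ·) '' (S : Set V))
    {p q : V} (hp : p ∈ A) (hq : q ∈ A) (c : K) : p + c • (q - p) ∈ A := by
  obtain ⟨v, S, rfl⟩ := hA
  obtain ⟨s, hs, rfl⟩ := hp
  obtain ⟨t, ht, rfl⟩ := hq
  refine ⟨s + c • (t - s), S.add_mem hs (S.smul_mem c (S.sub_mem ht hs)), ?_⟩
  have h1 : (v + t) - (v + s) = t - s := by abel
  simp only [h1]
  abel

/-- Parametrization of a one-dimensional affine subspace. -/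
lemma line_param {L : Set V} {v : V} {S : Submodule K V}
    (hL : L = (v + ·) '' (S : Set V)) (hr : Module.finrank K S = 1) :
    ∃ w : V, w ≠ 0 ∧ ∀ x, x ∈ L ↔ ∃ c : K, x = v + c • w := by
  obtain ⟨⟨w, hwS⟩, hw0, hspan⟩ := finrank_eq_one_iff'.mp hr
  refine ⟨w, fun h => hw0 (Subtype.ext h), fun x => ?_⟩
  subst hL
  constructor
  · rintro ⟨s, hs, rfl⟩
    obtain ⟨c, hc⟩ := hspan ⟨s, hs⟩
    have : c • w = s := congrArg Subtype.val hc
    exact ⟨c, by rw [this]⟩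
  · rintro ⟨c, rfl⟩
    exact ⟨c • w, S.smul_mem c hwS, rfl⟩

/-- A line meeting an affine subspace in two distinct points is contained in it. -/
lemma line_subset {A L : Set V}
    (hA : ∃ (v : V) (S : Submodule K V), A = (v + ·) '' (S : Set V))
    {v : V} {S : Submodule K V}
    (hL : L = (v + ·) '' (S : Set V)) (hr : Module.finrank K S = 1)
    {p q : V} (hp : p ∈ A ∩ L) (hq : q ∈ A ∩ L) (hpq : p ≠ q) : L ⊆ A := by
  obtain ⟨w, hw0, hmem⟩ := line_param hL hr
  obtain ⟨c, hc⟩ := (hmem p).mp hp.2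
  obtain ⟨d, hd⟩ := (hmem q).mp hq.2
  have hcd : c ≠ d := by rintro rfl; exact hpq (hc.trans hd.symm)
  intro x hx
  obtain ⟨u, hu⟩ := (hmem x).mp hx
  have key : x = p + ((u - c) * (d - c)⁻¹) • (q - p) := by
    subst hc hd hu
    have h1 : (v + d • w) - (v + c • w) = (d - c) • w := by rw [sub_smul]; abel
    rw [h1, smul_smul, mul_assoc, inv_mul_cancel₀ (sub_ne_zero.mpr hcd.symm), mul_one, sub_smul]
    abel
  rw [key]
  exact aff_mem_comb hA hp.1 hq.1 _

/-- Trichotomy for the intersection of an affine subspace with a line. -/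
lemma line_tricho {A : Set V}
    (hA : ∃ (v : V) (S : Submodule K V), A = (v + ·) '' (S : Set V))
    {L : Set V}
    (hL : ∃ (v : V) (S : Submodule K V),
      L = (v + ·) '' (S : Set V) ∧ Module.finrank K S = 1) :
    A ∩ L = ∅ ∨ (∃ p, A ∩ L = {p}) ∨ L ⊆ A := by
  obtain ⟨v, S, hLdef, hr⟩ := hL
  by_cases h1 : A ∩ L = ∅
  · exact Or.inl h1
  obtain ⟨p, hp⟩ := Set.nonempty_iff_ne_empty.mpr h1
  by_cases h2 : ∀ q ∈ A ∩ L, q = p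
  · exact Or.inr (Or.inl ⟨p, Set.eq_singleton_iff_unique_mem.mpr ⟨hp, h2⟩⟩)
  · push_neg at h2
    obtain ⟨q, hq, hqp⟩ := h2
    exact Or.inr (Or.inr (line_subset hA hLdef hr hq hp hqp))

/-- If an affine subspace (over `K`) satisfies the line-intersection condition for all
lines over `K'`, then it is also an affine subspace over `K'`. -/
lemma aff_closure {K' : Type*} [DivisionRing K'] [Module K' V] {A : Set V}
    (hA : ∃ (v : V) (S : Submodule K V), A = (v + ·) '' (S : Set V))
    (h : ∀ L : Set V, (∃ (v : V) (S : Submodule K' V),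
        L = (v + ·) '' (S : Set V) ∧ Module.finrank K' S = 1) →
      (A ∩ L = ∅ ∨ (∃ p, A ∩ L = {p}) ∨ L ⊆ A)) :
    ∃ (v : V) (S : Submodule K' V), A = (v + ·) '' (S : Set V) := by
  obtain ⟨v, S, hAdef⟩ := hA
  have hv : v ∈ A := hAdef ▸ ⟨0, S.zero_mem, by simp⟩
  have hmem : ∀ x : V, v + x ∈ A ↔ x ∈ S := by
    intro x
    rw [hAdef]
    constructor
    · rintro ⟨s, hs, hsx⟩
      have : x = s := by
        have := hsx
        simpa [add_right_inj] using this.symm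
      exact this ▸ hs
    · intro hx; exact ⟨x, hx, rfl⟩
  have hsmul : ∀ (c : K') (w : V), w ∈ (S : Set V) → c • w ∈ (S : Set V) := by
    intro c w hw
    by_cases hw0 : w = 0
    · simp [hw0]
    · have hline : ∃ (v' : V) (T : Submodule K' V),
          ((v + ·) '' ((Submodule.span K' {w} : Submodule K' V) : Set V))
            = (v' + ·) '' (T : Set V) ∧ Module.finrank K' T = 1 :=
        ⟨v, Submodule.span K' {w}, rfl, finrank_span_singleton hw0⟩
      have hvL : v ∈ A ∩ ((v + ·) '' ((Submodule.span K' {w} : Submodule K' V) : Set V)) :=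
        ⟨hv, 0, Submodule.zero_mem _, by simp⟩
      have hwL : v + w ∈ A ∩ ((v + ·) '' ((Submodule.span K' {w} : Submodule K' V) : Set V)) :=
        ⟨(hmem w).mpr hw, w, Submodule.mem_span_singleton_self w, rfl⟩
      rcases h _ hline with hc | ⟨p, hc⟩ | hc
      · exact absurd (hc ▸ hvL) (Set.notMem_empty v)
      · have h1 : v = p := by rw [hc] at hvL; exact hvL
        have h2 : v + w = p := by rw [hc] at hwL; exact hwL
        rw [← h1] at h2
        exact absurd (by simpa using h2) hw0
      · have : v + c • w ∈ A := hc ⟨c • w, Submodule.smul_mem _ c (Submodule.mem_span_singleton_self w), rfl⟩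
        exact (hmem _).mp this
  refine ⟨v, { carrier := (S : Set V),
               add_mem' := fun ha hb => S.add_mem ha hb,
               zero_mem' := S.zero_mem,
               smul_mem' := hsmul }, hAdef⟩

end Aux

/-- Lemma 3 (preserve2sided), characterization: an affine subspace `A` is two-sided iff
every (left or right) affine line meets it in `∅`, one point, or is contained in it. -/
theorem stmt_5 [DivisionRing k] {n : ℕ} (A : Set (Fin n → k))
    (hA : IsLeftAff A ∨ IsRightAff A) :
    (IsLeftAff A ∧ IsRightAff A) ↔
      ∀ L : Set (Fin n → k), (HasDimL L 1 ∨ HasDimR L 1) →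
        (A ∩ L = ∅ ∨ (∃ p, A ∩ L = {p}) ∨ L ⊆ A) := by
  constructor
  · rintro ⟨hLaff, hRaff⟩ L hL
    rcases hL with h | h
    · exact line_tricho hLaff h
    · exact line_tricho hRaff h
  · intro h
    rcases hA with hl | hr
    · exact ⟨hl, aff_closure hl (fun L hL => h L (Or.inr hL))⟩
    · exact ⟨aff_closure hr (fun L hL => h L (Or.inl hL)), hr⟩
end

section
/- Let k be a division ring and V ⊆ k^n a two-sided vector subspace of dimension d. Then there is a k-bimodule automorphism of k^n taking V onto the standard coordinate subspace k^d spanned by e_1,...,e_d. -/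
/-!
A sub-bimodule `W ⊆ k^n` has a complement `C` spanned by standard basis vectors, and the span of
the remaining standard basis vectors is a second complement `W'` of `C`. All three are
sub-bimodules, so the projections attached to `W ⊕ C` and `W' ⊕ C` commute with right
multiplication; the automorphism `w + c ↦ (W'-component of w) + c` is therefore a bimodule map,
and it carries `W` onto the coordinate subspace `W'`, of dimension `d`. A permutation of the
coordinates finally moves `W'` onto `k^d`.
-/

open Submodule

namespace Submodule

section CommonComplement

variable {R M : Type*} [Ring R] [AddCommGroup M] [Module R M] {p p' q : Submodule R M}

noncomputable def commonComplMap (hp : IsCompl p q) (hp' : IsCompl p' q) : Module.End R M :=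
  p'.projection q hp' + q.projection p hp.symm

theorem commonComplMap_mul_commonComplMap (hp : IsCompl p q) (hp' : IsCompl p' q) :
    commonComplMap hp' hp * commonComplMap hp hp' = 1 := by
  have h₁ : p.projection q hp * p'.projection q hp' = p.projection q hp := by
    rw [Module.End.mul_eq_comp,
      LinearMap.IsIdempotentElem.comp_eq_left_iff (isIdempotentElem_projection hp'),
      ker_projection, ker_projection]
  have h₂ : p.projection q hp * q.projection p hp.symm = 0 := by
    rw [Module.End.mul_eq_comp, ← LinearMap.range_le_ker_iff, range_projection, ker_projection]
  have h₃ : q.projection p' hp'.symm * p'.projection q hp' = 0 := by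
    rw [Module.End.mul_eq_comp, ← LinearMap.range_le_ker_iff, range_projection, ker_projection]
  have h₄ : q.projection p' hp'.symm * q.projection p hp.symm = q.projection p hp.symm := by
    rw [Module.End.mul_eq_comp,
      LinearMap.IsIdempotentElem.comp_eq_right_iff (isIdempotentElem_projection hp'.symm),
      range_projection, range_projection]
  rw [commonComplMap, commonComplMap, mul_add, add_mul, add_mul, h₁, h₂, h₃, h₄, add_zero,
    zero_add]
  exact projection_add_projection_eq_id hp

/-- Writing `x = w + c` with `w ∈ p`, `c ∈ q`, this sends `x` to `w' + c`, where `w'` is the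
`p'`-component of `w` along `q`. -/
noncomputable def commonComplEquiv (hp : IsCompl p q) (hp' : IsCompl p' q) : M ≃ₗ[R] M :=
  .ofLinearMap (commonComplMap hp hp') (commonComplMap hp' hp)
    (commonComplMap_mul_commonComplMap hp' hp) (commonComplMap_mul_commonComplMap hp hp')

theorem commonComplMap_mem_of_mem (hp : IsCompl p q) (hp' : IsCompl p' q) {x : M} (hx : x ∈ p) :
    commonComplMap hp hp' x ∈ p' := by
  rw [commonComplMap, LinearMap.add_apply, (projection_apply_eq_zero_iff hp.symm).mpr hx, add_zero]
  exact projection_apply_mem hp' x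

theorem map_commonComplEquiv (hp : IsCompl p q) (hp' : IsCompl p' q) :
    p.map (commonComplEquiv hp hp' : M →ₗ[R] M) = p' :=
  le_antisymm (map_le_iff_le_comap.mpr fun _ => commonComplMap_mem_of_mem hp hp')
    fun y hy =>
      ⟨_, commonComplMap_mem_of_mem hp' hp hy, (commonComplEquiv hp hp').apply_symm_apply y⟩

theorem commute_projection {T : Module.End R M} (hpq : IsCompl p q)
    (hp : p ∈ T.invtSubmodule) (hq : q ∈ T.invtSubmodule) : Commute (p.projection q hpq) T :=
  (LinearMap.IsIdempotentElem.commute_iff (isIdempotentElem_projection hpq)).mpr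
    ⟨(range_projection hpq).symm ▸ hp, (ker_projection hpq).symm ▸ hq⟩

theorem commute_commonComplEquiv {T : Module.End R M} (hp : IsCompl p q) (hp' : IsCompl p' q)
    (hpT : p ∈ T.invtSubmodule) (hp'T : p' ∈ T.invtSubmodule) (hqT : q ∈ T.invtSubmodule) :
    Commute (commonComplEquiv hp hp' : Module.End R M) T :=
  (commute_projection hp' hp'T hqT).add_left (commute_projection hp.symm hqT hpT)

end CommonComplement

theorem exists_isCompl_span_image {K V ι : Type*} [DivisionRing K] [AddCommGroup V] [Module K V]
    [Finite ι] {v : ι → V} (hv : span K (Set.range v) = ⊤) (W : Submodule K V) :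
    ∃ s : Set ι, IsCompl W (span K (v '' s)) := by
  obtain ⟨s, hs⟩ := Set.toFinite {s : Set ι | Disjoint W (span K (v '' s))} |>.exists_maximal
    ⟨∅, by simp⟩
  refine ⟨s, hs.prop, codisjoint_iff.mpr (eq_top_iff.mpr (hv ▸ span_le.mpr ?_))⟩
  rintro _ ⟨i, rfl⟩
  by_contra hi
  have hvi : v i ≠ 0 := fun h => hi (h ▸ zero_mem _)
  have hdisj : Disjoint W (span K (v '' insert i s)) := by
    rw [Set.image_insert_eq, span_insert, sup_comm]
    exact hs.prop.disjoint_sup_right_of_disjoint_sup_left ((disjoint_span_singleton' hvi).mpr hi)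
  exact hi (mem_sup_right (subset_span ⟨i, hs.mem_of_prop_insert hdisj, rfl⟩))

end Submodule

theorem Fin.exists_perm_mem_iff_lt_ncard {n : ℕ} (t : Set (Fin n)) :
    ∃ σ : Equiv.Perm (Fin n), ∀ i, σ i ∈ t ↔ (i : ℕ) < t.ncard := by
  classical
  have hle : t.ncard ≤ n := by simpa using t.ncard_le_card
  have hcard : Nat.card {j : Fin n // (j : ℕ) < t.ncard} = Nat.card t := by
    rw [Nat.card_coe_set_eq, ← Nat.card_congr (Fin.castLEquiv hle), Nat.card_fin]
  obtain ⟨e⟩ := Finite.card_eq.mp hcard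
  exact ⟨e.extendSubtype, fun i => ⟨fun h => by_contra fun hi => e.extendSubtype_not_mem i hi h,
    e.extendSubtype_mem i⟩⟩

open MulOpposite

section Bimodule

variable {K : Type*} [DivisionRing K] (ι : Type*)

def Pi.rightMul (a : K) : Module.End K (ι → K) :=
  DistribSMul.toLinearMap K (ι → K) (op a)

variable {ι}

theorem Pi.rightMul_apply (a : K) (x : ι → K) : Pi.rightMul ι a x = fun i => x i * a :=
  rfl

variable [Finite ι]

theorem Pi.spanSubset_mem_invtSubmodule_rightMul (s : Set ι) (a : K) :
    Pi.spanSubset K s ∈ (Pi.rightMul ι a).invtSubmodule :=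
  fun x hx => Pi.mem_spanSubset_iff.mpr fun i hi => by
    simp [Pi.rightMul_apply, Pi.mem_spanSubset_iff.mp hx i hi]

theorem Pi.map_funCongrLeft_spanSubset {ι' : Type*} [Finite ι'] (e : ι' ≃ ι) (s : Set ι) :
    (Pi.spanSubset K s).map (LinearEquiv.funCongrLeft K K e : (ι → K) →ₗ[K] ι' → K) =
      Pi.spanSubset K (e ⁻¹' s) := by
  ext x
  simp [mem_map_equiv, Pi.mem_spanSubset_iff, ← e.forall_congr_right]

theorem exists_linearEquiv_commute_rightMul_map_eq_spanSubset (W : Submodule K (ι → K))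
    (hW : ∀ a : K, W ∈ (Pi.rightMul ι a).invtSubmodule) :
    ∃ (e : (ι → K) ≃ₗ[K] (ι → K)) (t : Set ι),
      (∀ a : K, Commute (e : Module.End K (ι → K)) (Pi.rightMul ι a)) ∧
      W.map (e : (ι → K) →ₗ[K] ι → K) = Pi.spanSubset K t := by
  obtain ⟨s, hs⟩ := W.exists_isCompl_span_image (Pi.basisFun K ι).span_eq
  have hs' : IsCompl (Pi.spanSubset K sᶜ) (Pi.spanSubset K s) :=
    (Pi.basisFun K ι).linearIndependent.isCompl_span_image (Pi.basisFun K ι).span_eq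
      isCompl_compl.symm
  exact ⟨commonComplEquiv hs hs', sᶜ, fun a => commute_commonComplEquiv hs hs' (hW a)
    (Pi.spanSubset_mem_invtSubmodule_rightMul _ a) (Pi.spanSubset_mem_invtSubmodule_rightMul _ a),
    map_commonComplEquiv hs hs'⟩

end Bimodule

/-- Lemma 4 (class2sided): a two-sided vector subspace `V ⊆ k^n` of dimension `d` can
be taken to the standard coordinate subspace `k^d` by a `k`-bimodule automorphism. -/
theorem stmt_7 {k : Type*} [DivisionRing k] {n d : ℕ}
    (Vl : Submodule k (Fin n → k)) (Vr : Submodule kᵐᵒᵖ (Fin n → k))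
    (hV : (Vl : Set (Fin n → k)) = (Vr : Set (Fin n → k)))
    (hd : Module.finrank k Vl = d) :
    ∃ g : (Fin n → k) ≃ₗ[k] (Fin n → k),
      (∀ (a : k) (x : Fin n → k), g (fun i => x i * a) = fun i => g x i * a) ∧
      g '' (Vl : Set (Fin n → k)) = {x : Fin n → k | ∀ i : Fin n, d ≤ (i : ℕ) → x i = 0} := by
  have hVl : ∀ a : k, Vl ∈ (Pi.rightMul (Fin n) a).invtSubmodule := fun a x hx => by
    have hx' : x ∈ (Vr : Set (Fin n → k)) := hV ▸ hx
    change op a • x ∈ (Vl : Set (Fin n → k))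
    exact hV ▸ Vr.smul_mem (op a) hx'
  obtain ⟨ψ, t, hψ, hψVl⟩ := exists_linearEquiv_commute_rightMul_map_eq_spanSubset Vl hVl
  have ht : t.ncard = d := by
    rw [← hd, ← Pi.dim_spanSubset (R := k), ← hψVl, LinearEquiv.finrank_map_eq]
  obtain ⟨σ, hσ⟩ := Fin.exists_perm_mem_iff_lt_ncard t
  refine ⟨ψ.trans (LinearEquiv.funCongrLeft k k σ), fun a x => ?_, ?_⟩
  · have hψx : ψ (fun i => x i * a) = fun i => ψ x i * a := congr($((hψ a).eq) x)
    simp only [LinearEquiv.trans_apply, hψx]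
    rfl
  · rw [← LinearEquiv.coe_coe, ← Submodule.map_coe, LinearEquiv.coe_trans, Submodule.map_comp,
      hψVl, Pi.map_funCongrLeft_spanSubset]
    ext x
    simp [Pi.mem_spanSubset_iff, hσ, ht]
end

section
/- Let k be a division ring and P ⊆ k^n a purely left affine 2-plane. Then for every point x ∈ P, there is at most one right affine line through x contained in P. -/
open Function Set

variable {k : Type*}

/-!
Write `P = x + S` with `S` a left plane. The vectors of `S` all of whose right multiples stay in
`S` form a left subspace `C ≤ S`, the right core, and every right line in `P` through `x` has its
direction inside `C`. Since `P` is not right affine, `C ≠ S`, so `C` is at most a left line. A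
nonzero `w ∈ C` then spans `C` on the left, and because `C` is closed under right multiplication
the left line `k w` is also the right line `w k`. So every right line through `x` in `P` is `x + C`.
-/

open Module Submodule

theorem image_add_submodule_eq_of_mem {R M : Type*} [Ring R] [AddCommGroup M] [Module R M]
    {S : Submodule R M} {v x : M} (hx : x ∈ (v + ·) '' (S : Set M)) :
    (v + ·) '' (S : Set M) = (x + ·) '' (S : Set M) := by
  obtain ⟨s, hs, rfl⟩ := hx
  exact (leftAddCoset_eq_iff S.toAddSubgroup).2 (by simpa using hs)

namespace Submodule

variable {R M : Type*} (R' : Type*) [Semiring R] [Monoid R'] [AddCommMonoid M] [Module R M]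
  [DistribMulAction R' M] [SMulCommClass R R' M]

/-- The largest `R`-submodule of `S` that is stable under the action of `R'`. -/
def rightCore (S : Submodule R M) : Submodule R M where
  carrier := {v | ∀ b : R', b • v ∈ S}
  add_mem' hu hv b := by rw [smul_add]; exact S.add_mem (hu b) (hv b)
  zero_mem' b := by rw [smul_zero]; exact S.zero_mem
  smul_mem' c _ hv b := by rw [← smul_comm]; exact S.smul_mem c (hv b)

variable {R'} {S : Submodule R M}

theorem rightCore_le : S.rightCore R' ≤ S := fun v hv => by simpa using hv 1

theorem smul_mem_rightCore (b : R') {v : M} (hv : v ∈ S.rightCore R') :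
    b • v ∈ S.rightCore R' := fun b' => by rw [smul_smul]; exact hv _

end Submodule

section DivisionRing

variable [DivisionRing k]

theorem isRightAff_of_rightCore_eq {n : ℕ} {S : Submodule k (Fin n → k)}
    (h : S.rightCore kᵐᵒᵖ = S) (x : Fin n → k) : IsRightAff ((x + ·) '' (S : Set (Fin n → k))) :=
  ⟨x, { S.toAddSubmonoid with
    smul_mem' := fun b _ hv => h.le (smul_mem_rightCore b (h.ge hv)) }, rfl⟩

/-- Comparing a nonzero coordinate `w i` shows `d • w = w * ((w i)⁻¹ * d * w i)`. -/
theorem coe_span_op_singleton_eq_of_forall_smul_mem {ι : Type*} {w : ι → k} (hw : w ≠ 0)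
    (h : ∀ a : kᵐᵒᵖ, a • w ∈ k ∙ w) :
    ((kᵐᵒᵖ ∙ w : Submodule kᵐᵒᵖ (ι → k)) : Set (ι → k)) = k ∙ w := by
  ext u
  simp only [SetLike.mem_coe]
  constructor
  · intro hu
    obtain ⟨a, rfl⟩ := mem_span_singleton.1 hu
    exact h a
  · intro hu
    obtain ⟨d, rfl⟩ := mem_span_singleton.1 hu
    obtain ⟨i, hi⟩ : ∃ i, w i ≠ 0 := by simpa [funext_iff] using hw
    obtain ⟨e, he⟩ := mem_span_singleton.1 (h (MulOpposite.op ((w i)⁻¹ * (d * w i))))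
    have hed : e = d := by
      refine mul_right_cancel₀ hi ?_
      have := congrFun he i
      simp only [Pi.smul_apply, smul_eq_mul, MulOpposite.smul_eq_mul_unop,
        MulOpposite.unop_op] at this
      rw [this, ← mul_assoc, mul_inv_cancel₀ hi, one_mul]
    exact mem_span_singleton.2 ⟨_, by rw [← he, hed]⟩

theorem HasDimR.exists_eq_image_add_span {n : ℕ} {L : Set (Fin n → k)} (hL : HasDimR L 1)
    {x : Fin n → k} (hx : x ∈ L) :
    ∃ w : Fin n → k, w ≠ 0 ∧ L = (x + ·) '' ((kᵐᵒᵖ ∙ w : Submodule kᵐᵒᵖ (Fin n → k)) : Set _) := by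
  obtain ⟨v, T, rfl, hT⟩ := hL
  obtain ⟨⟨w, hwT⟩, hw0, -⟩ := finrank_eq_one_iff'.1 hT
  have hw0 : w ≠ 0 := by simpa using hw0
  refine ⟨w, hw0, ?_⟩
  rw [image_add_submodule_eq_of_mem hx, ← eq_span_singleton_of_mem_of_finrank_eq_one hT hwT hw0]

theorem coe_span_op_singleton_eq_rightCore {n : ℕ} {S : Submodule k (Fin n → k)}
    [FiniteDimensional k S] (hcore : finrank k (S.rightCore kᵐᵒᵖ) ≤ 1) {w : Fin n → k}
    (hw : w ≠ 0) (hwS : ((kᵐᵒᵖ ∙ w : Submodule kᵐᵒᵖ (Fin n → k)) : Set (Fin n → k)) ⊆ S) :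
    ((kᵐᵒᵖ ∙ w : Submodule kᵐᵒᵖ (Fin n → k)) : Set (Fin n → k)) = S.rightCore kᵐᵒᵖ := by
  have hw_core : w ∈ S.rightCore kᵐᵒᵖ := fun a => hwS (mem_span_singleton.2 ⟨a, rfl⟩)
  have : FiniteDimensional k (S.rightCore kᵐᵒᵖ) :=
    Submodule.finiteDimensional_of_le rightCore_le
  have hline : k ∙ w = S.rightCore kᵐᵒᵖ :=
    eq_of_le_of_finrank_le ((span_singleton_le_iff_mem _ _).2 hw_core)
      (by rwa [finrank_span_singleton hw])
  rw [coe_span_op_singleton_eq_of_forall_smul_mem hw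
    (fun a => hline ▸ smul_mem_rightCore a hw_core), hline]

end DivisionRing

/-- Lemma 5 (notmorethanone): a purely left affine 2-plane contains at most one right
affine line through any of its points. -/
theorem stmt_8 [DivisionRing k] {n : ℕ} (P : Set (Fin n → k))
    (hP : HasDimL P 2) (hnotR : ¬ IsRightAff P)
    (x : Fin n → k) (hx : x ∈ P)
    (L L' : Set (Fin n → k)) (hL : HasDimR L 1) (hL' : HasDimR L' 1)
    (hxL : x ∈ L) (hxL' : x ∈ L') (hLP : L ⊆ P) (hL'P : L' ⊆ P) :
    L = L' := by
  obtain ⟨v, S, rfl, hS⟩ := hP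
  rw [image_add_submodule_eq_of_mem hx] at hnotR hLP hL'P
  have : FiniteDimensional k S := Module.finite_of_finrank_pos (by omega)
  have hcore_lt : S.rightCore kᵐᵒᵖ < S :=
    lt_of_le_of_ne rightCore_le fun h => hnotR (isRightAff_of_rightCore_eq h x)
  have hcore : finrank k (S.rightCore kᵐᵒᵖ) ≤ 1 := by
    have := finrank_lt_finrank_of_lt hcore_lt
    omega
  obtain ⟨w, hw, rfl⟩ := hL.exists_eq_image_add_span hxL
  obtain ⟨w', hw', rfl⟩ := hL'.exists_eq_image_add_span hxL'
  rw [image_subset_image_iff (add_right_injective x)] at hLP hL'P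
  rw [coe_span_op_singleton_eq_rightCore hcore hw hLP,
    coe_span_op_singleton_eq_rightCore hcore hw' hL'P]
end

section
/- Let k be a division ring and D = diag(a_1,...,a_n) with all a_i nonzero, such that the map x ↦ xD from k^n to k^n takes every right k-subspace to a right k-subspace. Then a_i⁻¹a_j ∈ Z(k) for all i, j. -/
/-- If `x ↦ x·diag(a₁,…,aₙ)` (all `aᵢ ≠ 0`) takes right subspaces of `k^n` to right
subspaces, then `aᵢ⁻¹ aⱼ` is central for all `i, j`. -/
theorem stmt_10 {k : Type*} [DivisionRing k] {n : ℕ} (a : Fin n → k)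
    (ha : ∀ i, a i ≠ 0)
    (h : ∀ S : Submodule kᵐᵒᵖ (Fin n → k),
      ∃ T : Submodule kᵐᵒᵖ (Fin n → k),
        (fun x : Fin n → k => fun i => x i * a i) '' (S : Set (Fin n → k))
          = (T : Set (Fin n → k))) :
    ∀ i j, (a i)⁻¹ * a j ∈ Subring.center k := by
  intro i j
  rcases eq_or_ne i j with rfl | hij
  · rw [inv_mul_cancel₀ (ha i)]; exact Subring.one_mem _
  · set v : Fin n → k := fun l => if l = i ∨ l = j then 1 else 0 with hv
    obtain ⟨T, hT⟩ := h (Submodule.span kᵐᵒᵖ {v})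
    rw [Subring.mem_center_iff]
    intro c
    have hvS : v ∈ Submodule.span kᵐᵒᵖ {v} := Submodule.mem_span_singleton_self v
    have hwT : (fun l => v l * a l) ∈ T := by
      rw [← SetLike.mem_coe, ← hT]; exact ⟨v, hvS, rfl⟩
    have hcw : (MulOpposite.op c) • (fun l => v l * a l) ∈ T := T.smul_mem _ hwT
    rw [← SetLike.mem_coe, ← hT] at hcw
    obtain ⟨u, huS, huEq⟩ := hcw
    rw [SetLike.mem_coe, Submodule.mem_span_singleton] at huS
    obtain ⟨d, rfl⟩ := huS
    have h1 := congrFun huEq i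
    have h2 := congrFun huEq j
    simp [hv, hij, MulOpposite.smul_eq_mul_unop] at h1 h2
    -- h1 : d.unop * a i = a i * c,  h2 : d.unop * a j = a j * c (hopefully)
    have e1 : c = (a i)⁻¹ * MulOpposite.unop d * a i := by
      rw [mul_assoc, h1, ← mul_assoc, inv_mul_cancel₀ (ha i), one_mul]
    calc c * ((a i)⁻¹ * a j)
        = (a i)⁻¹ * MulOpposite.unop d * a i * ((a i)⁻¹ * a j) := by rw [← e1]
      _ = (a i)⁻¹ * (MulOpposite.unop d * (a i * ((a i)⁻¹ * a j))) := by
          simp only [mul_assoc]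
      _ = (a i)⁻¹ * (MulOpposite.unop d * a j) := by
          rw [← mul_assoc (a i), mul_inv_cancel₀ (ha i), one_mul]
      _ = (a i)⁻¹ * (a j * c) := by rw [h2]
      _ = (a i)⁻¹ * a j * c := by rw [mul_assoc]
end

section
/- Let k be a division ring and f : k² → k² a bijection with f(0) = 0 that takes every left affine line to a right affine line and every two-sided affine line to a two-sided affine line. Then f is additive: f(x + y) = f(x) + f(y) for all x, y ∈ k². -/
open Function Set

variable {k : Type*}

/-- `L` is a left affine line in `k²`. -/
def IsLeftAffLine [DivisionRing k] (L : Set (k × k)) : Prop :=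
  ∃ (v : k × k) (S : Submodule k (k × k)),
    L = (v + ·) '' (S : Set (k × k)) ∧ Module.finrank k S = 1

/-- `L` is a right affine line in `k²` (right modules encoded via `kᵐᵒᵖ`). -/
def IsRightAffLine [DivisionRing k] (L : Set (k × k)) : Prop :=
  ∃ (v : k × k) (S : Submodule kᵐᵒᵖ (k × k)),
    L = (v + ·) '' (S : Set (k × k)) ∧ Module.finrank kᵐᵒᵖ S = 1

/-!
Lines through `0` go to lines through `0`, so `f '' (k ∙ p) = kᵐᵒᵖ ∙ f p`. If `x ∉ k ∙ y`, the
line `x + k ∙ y` misses `k ∙ y`, so its image is a right line through `f x` and `f (x + y)` that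
misses `kᵐᵒᵖ ∙ f y`; in the plane disjoint lines are parallel, hence
`f (x + y) - f x ∈ kᵐᵒᵖ ∙ f y`. Exchanging `x` and `y` gives `f (x + y) - f y ∈ kᵐᵒᵖ ∙ f x`, and
as `f x`, `f y` span different lines, `f (x + y) - f x - f y = 0`. If `y ∈ k ∙ x`, add a vector
`z` off that line and compare the two expansions of `f (x + y + z)`.
-/

namespace Submodule

variable {K V : Type*} [DivisionRing K] [AddCommGroup V] [Module K V]

theorem mem_image_add_left_iff {S : Submodule K V} {v p : V} :
    p ∈ (v + ·) '' (S : Set V) ↔ p - v ∈ S := by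
  simp [Set.image_add_left, neg_add_eq_sub]

theorem image_add_left_eq_span_singleton {S : Submodule K V} (hS : Module.finrank K S = 1)
    {v a : V} (h0 : 0 ∈ (v + ·) '' (S : Set V)) (ha : a ∈ (v + ·) '' (S : Set V))
    (ha0 : a ≠ 0) : (v + ·) '' (S : Set V) = K ∙ a := by
  have hv : v ∈ S := by simpa [mem_image_add_left_iff] using h0
  have himage : (v + ·) '' (S : Set V) = S := by
    ext p
    rw [mem_image_add_left_iff, SetLike.mem_coe, S.sub_mem_iff_left hv]
  rw [himage] at ha ⊢
  rw [← eq_span_singleton_of_mem_of_finrank_eq_one hS ha ha0]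

theorem notMem_span_singleton_swap {x y : V} (hx : x ≠ 0) (hy : y ∉ K ∙ x) : x ∉ K ∙ y := by
  intro hxy
  have hy0 : y ≠ 0 := by rintro rfl; exact hy (zero_mem _)
  have hxy' := eq_span_singleton_of_mem_of_finrank_eq_one (finrank_span_singleton hy0) hxy hx
  exact hy (hxy' ▸ mem_span_singleton_self y)

theorem exists_notMem_span_singleton (hV : Module.finrank K V = 2) (x : V) :
    ∃ z : V, z ∉ K ∙ x := by
  refine SetLike.exists_not_mem_of_ne_top _ fun htop => ?_
  have := finrank_span_le_card (R := K) ({x} : Set V)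
  rw [htop, finrank_top, hV] at this
  simp at this

/-- Two disjoint lines in a plane are parallel. -/
theorem eq_of_disjoint_image_add_left (hV : Module.finrank K V = 2) {S T : Submodule K V}
    (hS : Module.finrank K S = 1) (hT : Module.finrank K T = 1) {v : V}
    (h : Disjoint ((v + ·) '' (S : Set V)) (T : Set V)) : S = T := by
  have : FiniteDimensional K V := Module.finite_of_finrank_pos (by omega)
  by_cases hST : S ≤ T
  · exact eq_of_le_of_finrank_eq hST (hS.trans hT.symm)
  have hsup : S ⊔ T = ⊤ := by
    have hlt := finrank_lt_finrank_of_lt (right_lt_sup.mpr hST)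
    exact eq_top_of_finrank_eq (le_antisymm (finrank_le _) (by omega))
  obtain ⟨s, hs, t, ht, hst⟩ := mem_sup.mp (hsup ▸ mem_top : v ∈ S ⊔ T)
  refine absurd ?_ (Set.disjoint_left.mp h ⟨-s, neg_mem hs, rfl⟩)
  simpa [← hst] using ht

end Submodule

theorem finrank_mulOpposite_prod_self [DivisionRing k] : Module.finrank kᵐᵒᵖ (k × k) = 2 := by
  have hk : Module.finrank kᵐᵒᵖ k = 1 :=
    (finrank_eq_one_iff_of_nonzero' (1 : k) one_ne_zero).mpr fun w => ⟨MulOpposite.op w, by simp⟩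
  have : Module.Finite kᵐᵒᵖ k := Module.finite_of_finrank_pos (by omega)
  rw [Module.finrank_prod, hk]

def MapsLeftLinesToRightLines [DivisionRing k] (f : k × k → k × k) : Prop :=
  ∀ L : Set (k × k), IsLeftAffLine L → IsRightAffLine (f '' L)

namespace MapsLeftLinesToRightLines

open Submodule

variable [DivisionRing k] {f : k × k → k × k}

theorem image_span_singleton (hL : MapsLeftLinesToRightLines f) (hf : Injective f)
    (h0 : f 0 = 0) {p : k × k} (hp : p ≠ 0) : f '' (k ∙ p : Set (k × k)) = kᵐᵒᵖ ∙ f p := by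
  obtain ⟨v, S, hv, hS⟩ := hL (k ∙ p : Set (k × k)) ⟨0, k ∙ p, by simp, finrank_span_singleton hp⟩
  rw [hv]
  refine image_add_left_eq_span_singleton hS (hv ▸ ⟨0, zero_mem _, h0⟩)
    (hv ▸ mem_image_of_mem f (mem_span_singleton_self p)) ?_
  exact fun hfp => hp (hf (hfp.trans h0.symm))

theorem map_add_sub_map_mem_span (hL : MapsLeftLinesToRightLines f) (hf : Injective f)
    (h0 : f 0 = 0) {x y : k × k} (hx : x ∉ k ∙ y) : f (x + y) - f x ∈ kᵐᵒᵖ ∙ f y := by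
  rcases eq_or_ne y 0 with rfl | hy
  · simp
  obtain ⟨v, S, hv, hS⟩ := hL _ ⟨x, k ∙ y, rfl, finrank_span_singleton hy⟩
  have hdisj : Disjoint ((x + ·) '' (k ∙ y : Set (k × k))) (k ∙ y : Set (k × k)) := by
    refine Set.disjoint_left.mpr fun p hpx hpy => hx ?_
    simpa using sub_mem hpy (mem_image_add_left_iff.mp hpx)
  have hfy : f y ≠ 0 := fun h => hy (hf (h.trans h0.symm))
  have hSy : S = kᵐᵒᵖ ∙ f y := by
    refine eq_of_disjoint_image_add_left finrank_mulOpposite_prod_self hS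
      (finrank_span_singleton hfy) (v := v) ?_
    rw [← hv, ← image_span_singleton hL hf h0 hy]
    exact (disjoint_image_iff hf).mpr hdisj
  have hmem : ∀ z ∈ k ∙ y, f (x + z) - v ∈ S := fun z hz =>
    mem_image_add_left_iff.mp (hv ▸ mem_image_of_mem f ⟨z, hz, rfl⟩)
  simpa [hSy] using sub_mem (hmem y (mem_span_singleton_self y)) (hmem 0 (zero_mem _))

theorem map_add_of_notMem_span (hL : MapsLeftLinesToRightLines f) (hf : Injective f)
    (h0 : f 0 = 0) {x y : k × k} (hy : y ∉ k ∙ x) : f (x + y) = f x + f y := by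
  rcases eq_or_ne x 0 with rfl | hx
  · simp [h0]
  have hy0 : y ≠ 0 := by rintro rfl; exact hy (zero_mem _)
  have hfy : f y ∉ kᵐᵒᵖ ∙ f x := by
    rw [← SetLike.mem_coe, ← image_span_singleton hL hf h0 hx]
    exact fun ⟨z, hz, hzy⟩ => hy (hf hzy ▸ hz)
  have hdisj : Disjoint (kᵐᵒᵖ ∙ f x) (kᵐᵒᵖ ∙ f y) :=
    (disjoint_span_singleton' fun h => hy0 (hf (h.trans h0.symm))).mpr hfy
  have hx' : f (x + y) - f y - f x ∈ kᵐᵒᵖ ∙ f x := by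
    refine sub_mem ?_ (mem_span_singleton_self _)
    simpa [add_comm] using map_add_sub_map_mem_span hL hf h0 hy
  have hy' : f (x + y) - f x - f y ∈ kᵐᵒᵖ ∙ f y :=
    sub_mem (map_add_sub_map_mem_span hL hf h0 (notMem_span_singleton_swap hx hy))
      (mem_span_singleton_self _)
  have hzero := disjoint_def.mp hdisj _ (sub_right_comm (f (x + y)) (f x) (f y) ▸ hx') hy'
  rwa [sub_sub, sub_eq_zero] at hzero

end MapsLeftLinesToRightLines

theorem stmt_11_general [DivisionRing k] (f : k × k → k × k)
    (hbij : Function.Bijective f) (h0 : f 0 = 0)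
    (hL : ∀ L : Set (k × k), IsLeftAffLine L → IsRightAffLine (f '' L)) :
    ∀ x y : k × k, f (x + y) = f x + f y := by
  intro x y
  have hadd {a b : k × k} (hb : b ∉ k ∙ a) : f (a + b) = f a + f b :=
    MapsLeftLinesToRightLines.map_add_of_notMem_span hL hbij.injective h0 hb
  by_cases hy : y ∉ k ∙ x
  · exact hadd hy
  rw [not_not] at hy
  obtain ⟨z, hz⟩ := Submodule.exists_notMem_span_singleton (K := k) (by simp) x
  have hyz : y + z ∉ k ∙ x := fun h => hz (by simpa using Submodule.sub_mem _ h hy)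
  have hzy : z ∉ k ∙ y := fun h => hz (Submodule.mem_span_singleton_trans h hy)
  have hzxy : z ∉ k ∙ (x + y) := fun h => hz (Submodule.mem_span_singleton_trans h
    (Submodule.add_mem _ (Submodule.mem_span_singleton_self x) hy))
  have hxyz := hadd hzxy
  rw [add_assoc, hadd hyz, hadd hzy, ← add_assoc] at hxyz
  exact (add_right_cancel hxyz).symm

/-- Lemma 9 (abgroups): a bijection of `k²` fixing `0`, taking left affine lines to
right affine lines and two-sided affine lines to two-sided affine lines, is additive. -/
theorem stmt_11 [DivisionRing k] (f : k × k → k × k)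
    (hbij : Function.Bijective f) (h0 : f 0 = 0)
    (hL : ∀ L : Set (k × k), IsLeftAffLine L → IsRightAffLine (f '' L))
    (h2 : ∀ L : Set (k × k), IsLeftAffLine L ∧ IsRightAffLine L →
      IsLeftAffLine (f '' L) ∧ IsRightAffLine (f '' L)) :
    ∀ x y : k × k, f (x + y) = f x + f y :=
  stmt_11_general f hbij h0 hL
end

section
/- Let k be a division ring and f : k² → k² a bijection taking every affine line (left or right) to an affine line, such that the image of every purely left affine line is a purely right affine line. Then k admits an anti-automorphism, i.e., an additive bijection α : k → k with α(xy) = α(y)α(x) for all x, y. -/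
/-!
After translating, `f` becomes an injective `g` with `g 0 = 0`. Call `d = (d₁, d₂)` a purely left
direction if `d₁ ≠ 0` and the slope `d₁⁻¹ d₂` is not central: then `k d` is not closed under right
multiplication, so every line `v + k d` is purely left and `g` maps it to a right line. This gives
`g (k d) = g(d) k`, and by injectivity `g (v + k d)` misses `g(d) k`, so in the right plane it is
the parallel line `g v + g(d) k`. For two independent purely left directions this forces
`g (u + w) = g u + g w`, while `g(u)` and `g(w)` stay right independent.

Fix `u = (1, c)` with `c` not central and write `g (t u) = g(u) σ(t)`. Routing sums through an
auxiliary direction `w` (of slope `c + 1`) makes `σ` additive, and comparing `g (r (u + w))` with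
`g (r u) + g (r w)` shows that the scale maps of `u`, `w` and `s u` coincide, whence
`σ(r s) = σ(s) σ(r)`. Injectivity is automatic, and surjectivity is `g (k u) = g(u) k`. If `k` is
commutative, the identity is an anti-automorphism.
-/

open Function Set

variable {k : Type*}

open Submodule MulOpposite Module

section Translates

variable {R V : Type*} [Ring R] [AddCommGroup V] [Module R V] {S : Submodule R V}

lemma image_add_eq_self_of_mem {x : V} (hx : x ∈ S) : (x + ·) '' (S : Set V) = S := by
  ext y
  refine ⟨?_, fun hy => ⟨-x + y, add_mem (neg_mem hx) hy, add_neg_cancel_left x y⟩⟩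
  rintro ⟨s, hs, rfl⟩
  exact add_mem hx hs

lemma image_add_eq_of_mem {v x : V} (hx : x ∈ (v + ·) '' (S : Set V)) :
    (v + ·) '' (S : Set V) = (x + ·) '' S := by
  obtain ⟨s, hs, rfl⟩ := hx
  ext y
  constructor
  · rintro ⟨t, ht, rfl⟩
    exact ⟨t - s, sub_mem ht hs, by dsimp only; abel⟩
  · rintro ⟨t, ht, rfl⟩
    exact ⟨s + t, add_mem hs ht, by dsimp only; abel⟩

end Translates

section Plane

variable {K V : Type*} [DivisionRing K] [AddCommGroup V] [Module K V] [FiniteDimensional K V]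
  {S T : Submodule K V}

lemma Submodule.sup_eq_top_of_finrank_eq_one (hV : finrank K V = 2) (hS : finrank K S = 1)
    (hT : finrank K T = 1) (hST : S ≠ T) : S ⊔ T = ⊤ := by
  have hlt : S < S ⊔ T := by
    refine lt_of_le_of_ne le_sup_left fun h => hST ?_
    exact (eq_of_le_of_finrank_eq (h ▸ le_sup_right) (by rw [hS, hT])).symm
  refine eq_top_of_finrank_eq (le_antisymm (finrank_le _) ?_)
  have := finrank_lt_finrank_of_lt hlt
  omega

lemma Submodule.eq_of_disjoint_image_add (hV : finrank K V = 2) (hS : finrank K S = 1)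
    (hT : finrank K T = 1) (v : V) (h : Disjoint ((v + ·) '' (S : Set V)) T) : S = T := by
  by_contra hST
  obtain ⟨s, hs, t, ht, hst⟩ :=
    mem_sup.1 (sup_eq_top_of_finrank_eq_one hV hS hT hST ▸ mem_top : v ∈ S ⊔ T)
  refine Set.disjoint_left.1 h ⟨-s, neg_mem hs, rfl⟩ ?_
  simpa [← hst] using ht

end Plane

section DivisionRing

variable [DivisionRing k]

lemma finrank_mulOpposite_self : finrank kᵐᵒᵖ k = 1 :=
  (finrank_eq_one_iff_of_nonzero' (1 : k) one_ne_zero).2 fun w => ⟨op w, one_mul w⟩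

instance : Module.Finite kᵐᵒᵖ k := Module.finite_of_finrank_eq_succ finrank_mulOpposite_self

lemma finrank_mulOpposite_prod : finrank kᵐᵒᵖ (k × k) = 2 := by
  rw [finrank_prod, finrank_mulOpposite_self]

lemma IsRightAffLine.image_add {L : Set (k × k)} (h : IsRightAffLine L) (w : k × k) :
    IsRightAffLine ((w + ·) '' L) := by
  obtain ⟨v, S, rfl, hS⟩ := h
  exact ⟨w + v, S, by rw [image_image]; simp only [add_assoc], hS⟩

def lineSlope (d : k × k) : k := d.1⁻¹ * d.2

/-- For `d ≠ 0` this says exactly that the left lines with direction `d` are not right lines. -/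
def IsPurelyLeftDir (d : k × k) : Prop := d.1 ≠ 0 ∧ lineSlope d ∉ Subring.center k

lemma lineSlope_smul (d : k × k) {a : k} (ha : a ≠ 0) : lineSlope (a • d) = lineSlope d := by
  simp [lineSlope, mul_inv_rev, mul_assoc, inv_mul_cancel_left₀ ha]

lemma lineSlope_mk_one (m : k) : lineSlope ((1 : k), m) = m := by simp [lineSlope]

lemma linearIndependent_of_lineSlope_ne {d e : k × k} (hd : d.1 ≠ 0) (he : e.1 ≠ 0)
    (h : lineSlope d ≠ lineSlope e) : LinearIndependent k ![d, e] := by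
  refine LinearIndependent.pair_iff.2 fun a b hab => ?_
  have h₁ : a * d.1 + b * e.1 = 0 := by simpa using congrArg Prod.fst hab
  have h₂ : a * d.2 + b * e.2 = 0 := by simpa using congrArg Prod.snd hab
  have ha : a = -(b * e.1) * d.1⁻¹ :=
    (eq_mul_inv_iff_mul_eq₀ hd).2 (eq_neg_of_add_eq_zero_left h₁)
  have hb : b * e.1 * (lineSlope e - lineSlope d) = 0 := by
    rw [← h₂, ha]
    simp only [lineSlope, mul_sub, mul_assoc, mul_inv_cancel_left₀ he, neg_mul]
    abel
  obtain rfl : b = 0 := by simpa [he, sub_eq_zero, Ne.symm h] using hb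
  simpa [hd] using h₁

lemma lineSlope_mem_center_of_op_smul_mem {d : k × k} (hd₁ : d.1 ≠ 0)
    (h : ∀ t : k, op t • d ∈ span k {d}) : lineSlope d ∈ Subring.center k := by
  refine Subring.mem_center_iff.2 fun t => ?_
  obtain ⟨r, hr⟩ := mem_span_singleton.1 (h t)
  have h₁ : r * d.1 = d.1 * t := by simpa using congrArg Prod.fst hr
  have h₂ : r * d.2 = d.2 * t := by simpa using congrArg Prod.snd hr
  have hr' : d.1⁻¹ * r = t * d.1⁻¹ := by
    rw [eq_mul_inv_iff_mul_eq₀ hd₁, mul_assoc, h₁, inv_mul_cancel_left₀ hd₁]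
  calc t * (d.1⁻¹ * d.2) = d.1⁻¹ * r * d.2 := by rw [hr', mul_assoc]
    _ = d.1⁻¹ * d.2 * t := by rw [mul_assoc, h₂, mul_assoc]

namespace IsPurelyLeftDir

variable {d : k × k}

lemma ne_zero (hd : IsPurelyLeftDir d) : d ≠ 0 := fun h => hd.1 (by simp [h])

lemma smul (hd : IsPurelyLeftDir d) {a : k} (ha : a ≠ 0) : IsPurelyLeftDir (a • d) :=
  ⟨by simpa using ⟨ha, hd.1⟩, lineSlope_smul d ha ▸ hd.2⟩

lemma isLeftAffLine (hd : IsPurelyLeftDir d) (v : k × k) :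
    IsLeftAffLine ((v + ·) '' (span k {d} : Set (k × k))) :=
  ⟨v, span k {d}, rfl, finrank_span_singleton hd.ne_zero⟩

lemma not_isRightAffLine (hd : IsPurelyLeftDir d) (v : k × k) :
    ¬ IsRightAffLine ((v + ·) '' (span k {d} : Set (k × k))) := by
  rintro ⟨v', S, hL, -⟩
  rw [image_add_eq_of_mem (hL ▸ ⟨0, zero_mem _, add_zero v⟩ : v ∈ (v' + ·) '' (S : Set _))] at hL
  have hS : (span k {d} : Set (k × k)) = S := image_injective.2 (add_right_injective v) hL
  refine hd.2 (lineSlope_mem_center_of_op_smul_mem hd.1 fun t => ?_)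
  rw [← SetLike.mem_coe, hS]
  exact S.smul_mem _ (by rw [← SetLike.mem_coe, ← hS]; exact mem_span_singleton_self d)

end IsPurelyLeftDir

lemma isPurelyLeftDir_mk_one {c x : k} (hcx : ¬Commute c x) : IsPurelyLeftDir ((1 : k), c) :=
  ⟨one_ne_zero, fun hc => hcx (Subring.mem_center_iff.1 (lineSlope_mk_one c ▸ hc) x).symm⟩

/-- The centralizer of `c` and its right translate by `s⁻¹` are proper additive subgroups of `k`,
and no group is a union of two proper subgroups. -/
lemma exists_not_commute_and_not_commute_mul {c x : k} (hcx : ¬Commute c x) {s : k}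
    (hs : s ≠ 0) : ∃ π : k, ¬Commute c π ∧ ¬Commute c (π * s) := by
  by_cases h₁ : Commute c (x * s)
  swap; · exact ⟨x, hcx, h₁⟩
  by_cases h₂ : Commute c (x * s⁻¹)
  swap; · exact ⟨x * s⁻¹, h₂, by rwa [inv_mul_cancel_right₀ hs]⟩
  refine ⟨x + x * s⁻¹, fun h => hcx ?_, fun h => hcx ?_⟩
  · simpa using h.sub_right h₂
  · rw [add_mul, inv_mul_cancel_right₀ hs] at h
    simpa using h.sub_right h₁

lemma inv_smul_add_smul_fst_and_lineSlope {c π a : k} (hπ : π ≠ 0) (hπa : 1 + π * a ≠ 0) :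
    (π⁻¹ • ((1 : k), c + 1) + a • ((1 : k), c)).1 = π⁻¹ * (1 + π * a) ∧
      lineSlope (π⁻¹ • ((1 : k), c + 1) + a • ((1 : k), c)) = c + (1 + π * a)⁻¹ := by
  have e : π⁻¹ + a = π⁻¹ * (1 + π * a) := by rw [mul_add, inv_mul_cancel_left₀ hπ, mul_one]
  have e' : c + 1 + π * (a * c) = (1 + π * a) * c + 1 := by
    rw [add_mul, one_mul, mul_assoc]; abel
  simp only [lineSlope, Prod.fst_add, Prod.snd_add, Prod.smul_fst, Prod.smul_snd, smul_eq_mul,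
    mul_one, e, true_and]
  rw [mul_inv_rev, inv_inv, mul_assoc, mul_add π, mul_inv_cancel_left₀ hπ, e', mul_add,
    inv_mul_cancel_left₀ hπa, mul_one]

lemma isPurelyLeftDir_inv_smul_add_smul {c π a : k} (h : ¬Commute c (π * a)) :
    IsPurelyLeftDir (π⁻¹ • ((1 : k), c + 1) + a • ((1 : k), c)) ∧
      lineSlope (π⁻¹ • ((1 : k), c + 1) + a • ((1 : k), c)) ≠ c := by
  have hπ : π ≠ 0 := by rintro rfl; simp at h
  have hπa : 1 + π * a ≠ 0 := fun h' => h (by simp [eq_neg_of_add_eq_zero_right h'])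
  have hr : ¬Commute c (1 + π * a)⁻¹ := fun h' =>
    h (by simpa using h'.inv_right₀.sub_right (Commute.one_right c))
  obtain ⟨h₁, h₂⟩ := inv_smul_add_smul_fst_and_lineSlope (c := c) hπ hπa
  refine ⟨⟨h₁ ▸ mul_ne_zero (inv_ne_zero hπ) hπa, fun hz => hr ?_⟩, fun h' => hr ?_⟩
  · rw [h₂] at hz
    have hc : Commute c (c + (1 + π * a)⁻¹) := Subring.mem_center_iff.1 hz c
    simpa using hc.sub_right (Commute.refl c)
  · rw [h₂, add_eq_left] at h'
    simp [h']

lemma exists_isPurelyLeftDir_add_smul {c x : k} (hcx : ¬Commute c x) {s : k} (hs : s ≠ 0) :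
    ∃ w : k × k, IsPurelyLeftDir w ∧ lineSlope w ≠ c ∧ ∀ a ∈ ({1, s} : Set k),
      IsPurelyLeftDir (w + a • ((1 : k), c)) ∧ lineSlope (w + a • ((1 : k), c)) ≠ c := by
  obtain ⟨π, h₁, h₂⟩ := exists_not_commute_and_not_commute_mul hcx hs
  have hπ : π ≠ 0 := by rintro rfl; exact h₁ (Commute.zero_right c)
  have hslope : lineSlope (π⁻¹ • ((1 : k), c + 1)) = c + 1 := by
    rw [lineSlope_smul _ (inv_ne_zero hπ), lineSlope_mk_one]
  refine ⟨π⁻¹ • ((1 : k), c + 1), ⟨by simpa using hπ, fun hc => hcx ?_⟩, by rw [hslope]; simp, ?_⟩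
  · rw [hslope] at hc
    have h := Subring.mem_center_iff.1 (sub_mem hc (one_mem _)) x
    rw [add_sub_cancel_right] at h
    exact h.symm
  rintro a (rfl | rfl)
  · exact isPurelyLeftDir_inv_smul_add_smul (by simpa using h₁)
  · exact isPurelyLeftDir_inv_smul_add_smul h₂

structure PurelyLeftToRight (g : k × k → k × k) : Prop where
  injective : Injective g
  map_zero : g 0 = 0
  isRightAffLine_image :
    ∀ L : Set (k × k), IsLeftAffLine L → ¬ IsRightAffLine L → IsRightAffLine (g '' L)

namespace PurelyLeftToRight

variable {g : k × k → k × k} {d u w : k × k}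

lemma of_injective {f : k × k → k × k} (hf : Injective f)
    (h : ∀ L : Set (k × k), IsLeftAffLine L → ¬ IsRightAffLine L → IsRightAffLine (f '' L)) :
    PurelyLeftToRight (fun p => f p - f 0) where
  injective _ _ hpq := hf (sub_left_injective hpq)
  map_zero := sub_self _
  isRightAffLine_image L hL hnL := by
    rw [show (fun p => f p - f 0) '' L = (-f 0 + ·) '' (f '' L) by
      rw [image_image]; simp only [sub_eq_neg_add]]
    exact (h L hL hnL).image_add _

lemma map_ne_zero (hg : PurelyLeftToRight g) {x : k × k} (hx : x ≠ 0) : g x ≠ 0 :=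
  (hg.injective.ne_iff' hg.map_zero).2 hx

lemma image_span_singleton (hg : PurelyLeftToRight g) (hd : IsPurelyLeftDir d) :
    g '' (span k {d} : Set (k × k)) = span kᵐᵒᵖ {g d} := by
  obtain ⟨v, S, hM, hS⟩ :=
    hg.isRightAffLine_image _ (hd.isLeftAffLine 0) (hd.not_isRightAffLine 0)
  simp only [zero_add, image_id'] at hM
  obtain ⟨s, hs, hvs⟩ : (0 : k × k) ∈ (v + ·) '' (S : Set (k × k)) :=
    hM ▸ ⟨0, zero_mem _, hg.map_zero⟩
  rw [eq_neg_of_add_eq_zero_left hvs, image_add_eq_self_of_mem (neg_mem hs)] at hM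
  have hgd : g d ∈ S := by
    rw [← SetLike.mem_coe, ← hM]
    exact mem_image_of_mem g (mem_span_singleton_self d)
  rw [hM, ← eq_span_singleton_of_mem_of_finrank_eq_one hS hgd (hg.map_ne_zero hd.ne_zero)]

lemma image_image_add_span_singleton (hg : PurelyLeftToRight g) (hd : IsPurelyLeftDir d)
    (v : k × k) : g '' ((v + ·) '' (span k {d} : Set (k × k))) =
      (g v + ·) '' (span kᵐᵒᵖ {g d} : Set (k × k)) := by
  by_cases hv : v ∈ span k {d}
  · have hgv : g v ∈ span kᵐᵒᵖ {g d} := by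
      rw [← SetLike.mem_coe, ← hg.image_span_singleton hd]
      exact mem_image_of_mem g hv
    rw [image_add_eq_self_of_mem hv, image_add_eq_self_of_mem hgv, hg.image_span_singleton hd]
  obtain ⟨v', S, hM, hS⟩ :=
    hg.isRightAffLine_image _ (hd.isLeftAffLine v) (hd.not_isRightAffLine v)
  have hgv : g v ∈ (v' + ·) '' (S : Set (k × k)) :=
    hM ▸ mem_image_of_mem g ⟨0, zero_mem _, add_zero v⟩
  rw [image_add_eq_of_mem hgv] at hM
  rw [hM, eq_of_disjoint_image_add finrank_mulOpposite_prod hS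
    (finrank_span_singleton (hg.map_ne_zero hd.ne_zero)) (g v)]
  rw [← hM, ← hg.image_span_singleton hd, disjoint_image_iff hg.injective]
  refine Set.disjoint_left.2 ?_
  rintro _ ⟨x, hx, rfl⟩ hvx
  exact hv (by simpa using sub_mem hvx hx)

lemma exists_map_add_smul_eq (hg : PurelyLeftToRight g) (hd : IsPurelyLeftDir d) (v : k × k)
    (t : k) : ∃ α : kᵐᵒᵖ, g (v + t • d) = g v + α • g d := by
  have : g (v + t • d) ∈ (g v + ·) '' (span kᵐᵒᵖ {g d} : Set (k × k)) := by
    rw [← hg.image_image_add_span_singleton hd]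
    exact mem_image_of_mem g (mem_image_of_mem _ (smul_mem _ t (mem_span_singleton_self d)))
  obtain ⟨_, hx, hgx⟩ := this
  obtain ⟨α, rfl⟩ := mem_span_singleton.1 hx
  exact ⟨α, hgx.symm⟩

lemma exists_map_smul_eq (hg : PurelyLeftToRight g) (hd : IsPurelyLeftDir d) (t : k) :
    ∃ α : kᵐᵒᵖ, g (t • d) = α • g d := by
  simpa [hg.map_zero] using hg.exists_map_add_smul_eq hd 0 t

lemma linearIndependent_map (hg : PurelyLeftToRight g) (hu : IsPurelyLeftDir u)
    (h : LinearIndependent k ![u, w]) : LinearIndependent kᵐᵒᵖ ![g u, g w] := by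
  refine (LinearIndependent.pair_iff' (hg.map_ne_zero hu.ne_zero)).2 fun α hα => ?_
  obtain ⟨x, hx, hxw⟩ : g w ∈ g '' (span k {u} : Set (k × k)) := by
    rw [hg.image_span_singleton hu, ← hα]
    exact smul_mem _ α (mem_span_singleton_self _)
  obtain ⟨a, rfl⟩ := mem_span_singleton.1 hx
  exact (LinearIndependent.pair_iff' hu.ne_zero).1 h a (hg.injective hxw)

lemma map_add (hg : PurelyLeftToRight g) (hu : IsPurelyLeftDir u) (hw : IsPurelyLeftDir w)
    (h : LinearIndependent k ![u, w]) : g (u + w) = g u + g w := by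
  obtain ⟨α, hα⟩ := hg.exists_map_add_smul_eq hw u 1
  obtain ⟨β, hβ⟩ := hg.exists_map_add_smul_eq hu w 1
  rw [one_smul] at hα hβ
  rw [add_comm w] at hβ
  have := LinearIndependent.pair_iff.1 (hg.linearIndependent_map hu h) (1 - β) (α - 1) (by
    rw [sub_smul, sub_smul, one_smul, one_smul, sub_add_sub_comm, sub_eq_zero, ← hα, hβ,
      add_comm])
  rw [hα, sub_eq_zero.1 this.2, one_smul]

lemma map_smul_add_smul (hg : PurelyLeftToRight g) (hu : IsPurelyLeftDir u)
    (hw : IsPurelyLeftDir w) (h : LinearIndependent k ![u, w]) (a b : k) :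
    g (a • u + b • w) = g (a • u) + g (b • w) := by
  rcases eq_or_ne a 0 with rfl | ha
  · simp [hg.map_zero]
  rcases eq_or_ne b 0 with rfl | hb
  · simp [hg.map_zero]
  exact hg.map_add (hu.smul ha) (hw.smul hb)
    ((LinearIndependent.pair_smul_smul_iff ha.isUnit hb.isUnit).2 h)

variable {σ τ : k → kᵐᵒᵖ}

lemma scale_zero (hg : PurelyLeftToRight g) (hu : IsPurelyLeftDir u)
    (hσ : ∀ t, g (t • u) = σ t • g u) : σ 0 = 0 := by
  simpa [hg.map_zero, hg.map_ne_zero hu.ne_zero, eq_comm] using hσ 0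

lemma scale_one (hg : PurelyLeftToRight g) (hu : IsPurelyLeftDir u)
    (hσ : ∀ t, g (t • u) = σ t • g u) : σ 1 = 1 :=
  smul_left_injective kᵐᵒᵖ (hg.map_ne_zero hu.ne_zero) (by simpa using (hσ 1).symm)

lemma scale_surjective (hg : PurelyLeftToRight g) (hu : IsPurelyLeftDir u)
    (hσ : ∀ t, g (t • u) = σ t • g u) : Surjective σ := by
  intro α
  obtain ⟨y, hy, hgy⟩ : α • g u ∈ g '' (span k {u} : Set (k × k)) := by
    rw [hg.image_span_singleton hu]
    exact smul_mem _ α (mem_span_singleton_self _)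
  obtain ⟨t, rfl⟩ := mem_span_singleton.1 hy
  exact ⟨t, smul_left_injective kᵐᵒᵖ (hg.map_ne_zero hu.ne_zero) ((hσ t).symm.trans hgy)⟩

lemma scale_add (hg : PurelyLeftToRight g) (hu : IsPurelyLeftDir u)
    (hσ : ∀ t, g (t • u) = σ t • g u) {s : k} (hw : IsPurelyLeftDir w)
    (hws : IsPurelyLeftDir (w + s • u)) (h₁ : LinearIndependent k ![w, u])
    (h₂ : LinearIndependent k ![w + s • u, u]) (t : k) : σ (s + t) = σ s + σ t := by
  have hadd : ∀ v, IsPurelyLeftDir v → LinearIndependent k ![v, u] →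
      ∀ x : k, g (v + x • u) = g v + g (x • u) := fun v hv h x => by
    simpa using hg.map_smul_add_smul hv hu h 1 x
  have key : g w + g ((s + t) • u) = g w + (g (s • u) + g (t • u)) := by
    rw [← hadd w hw h₁, add_smul, ← add_assoc, hadd _ hws h₂, hadd w hw h₁, add_assoc]
  rw [hσ, hσ, hσ, ← add_smul] at key
  exact smul_left_injective kᵐᵒᵖ (hg.map_ne_zero hu.ne_zero) (add_left_cancel key)

/-- Both scale maps agree with that of `u + w`: `g (r • (u + w)) = g (r • u) + g (r • w)` lies on
`g(u + w) k = (g u + g w) k`, and `g u`, `g w` are right independent. -/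
lemma scale_eq (hg : PurelyLeftToRight g) (hu : IsPurelyLeftDir u) (hw : IsPurelyLeftDir w)
    (huw : IsPurelyLeftDir (u + w)) (h : LinearIndependent k ![u, w])
    (hσ : ∀ t, g (t • u) = σ t • g u) (hτ : ∀ t, g (t • w) = τ t • g w) : σ = τ := by
  funext r
  obtain ⟨ρ, hρ⟩ := hg.exists_map_smul_eq huw r
  have : (σ r - ρ) • g u + (τ r - ρ) • g w = 0 := by
    rw [sub_smul, sub_smul, ← hσ, ← hτ, sub_add_sub_comm, ← smul_add, ← hg.map_add hu hw h,
      ← hρ, ← hg.map_smul_add_smul hu hw h, smul_add, sub_self]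
  obtain ⟨h₁, h₂⟩ := LinearIndependent.pair_iff.1 (hg.linearIndependent_map hu h) _ _ this
  exact (sub_eq_zero.1 h₁).trans (sub_eq_zero.1 h₂).symm

variable {c x : k}

lemma scale_add_of_not_commute (hg : PurelyLeftToRight g) (hcx : ¬Commute c x)
    (hσ : ∀ t, g (t • ((1 : k), c)) = σ t • g (1, c)) (s t : k) :
    σ (s + t) = σ s + σ t := by
  have hu := isPurelyLeftDir_mk_one hcx
  rcases eq_or_ne s 0 with rfl | hs
  · rw [zero_add, hg.scale_zero hu hσ, zero_add]
  obtain ⟨w, hw, hwc, hwa⟩ := exists_isPurelyLeftDir_add_smul hcx hs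
  obtain ⟨hws, hwsc⟩ := hwa s (by simp)
  exact hg.scale_add hu hσ hw hws
    (linearIndependent_of_lineSlope_ne hw.1 hu.1 (by rwa [lineSlope_mk_one]))
    (linearIndependent_of_lineSlope_ne hws.1 hu.1 (by rwa [lineSlope_mk_one])) t

/-- The scale maps of `(1, c)` and of `s • (1, c)` both agree with that of an auxiliary `w`. -/
lemma scale_mul_of_not_commute (hg : PurelyLeftToRight g) (hcx : ¬Commute c x)
    (hσ : ∀ t, g (t • ((1 : k), c)) = σ t • g (1, c)) (r s : k) :
    σ (r * s) = σ r * σ s := by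
  have hu := isPurelyLeftDir_mk_one hcx
  rcases eq_or_ne s 0 with rfl | hs
  · rw [mul_zero, hg.scale_zero hu hσ, mul_zero]
  obtain ⟨w, hw, hwc, hwa⟩ := exists_isPurelyLeftDir_add_smul hcx hs
  obtain ⟨hw₁, -⟩ := hwa 1 (by simp)
  obtain ⟨hws, -⟩ := hwa s (by simp)
  rw [one_smul, add_comm] at hw₁
  rw [add_comm] at hws
  choose ρ hρ using hg.exists_map_smul_eq hw
  choose τ hτ using hg.exists_map_smul_eq (hu.smul hs)
  have hσρ : σ = ρ := hg.scale_eq hu hw hw₁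
    (linearIndependent_of_lineSlope_ne hu.1 hw.1 (by rwa [lineSlope_mk_one, ne_comm])) hσ hρ
  have hτρ : τ = ρ := hg.scale_eq (hu.smul hs) hw hws
    (linearIndependent_of_lineSlope_ne (hu.smul hs).1 hw.1
      (by rwa [lineSlope_smul _ hs, lineSlope_mk_one, ne_comm])) hτ hρ
  refine smul_left_injective kᵐᵒᵖ (hg.map_ne_zero hu.ne_zero) ?_
  show σ (r * s) • g (1, c) = (σ r * σ s) • g (1, c)
  rw [← hσ, mul_smul, hτ, hσ, mul_smul, hτρ, hσρ]

theorem exists_surjective_ringHom (hg : PurelyLeftToRight g) (hcx : ¬Commute c x) :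
    ∃ σ : k →+* kᵐᵒᵖ, Surjective σ := by
  have hu := isPurelyLeftDir_mk_one hcx
  choose σ hσ using hg.exists_map_smul_eq hu
  exact ⟨RingHom.mk' ⟨⟨σ, hg.scale_one hu hσ⟩, hg.scale_mul_of_not_commute hcx hσ⟩
    (hg.scale_add_of_not_commute hcx hσ), hg.scale_surjective hu hσ⟩

end PurelyLeftToRight

end DivisionRing

theorem stmt_12_general [DivisionRing k] (f : k × k → k × k)
    (hbij : Function.Bijective f)
    (hpure : ∀ L : Set (k × k), IsLeftAffLine L → ¬ IsRightAffLine L →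
      (IsRightAffLine (f '' L) ∧ ¬ IsLeftAffLine (f '' L))) :
    ∃ α : k → k, Function.Bijective α ∧ (∀ a b : k, α (a + b) = α a + α b) ∧
      (∀ a b : k, α (a * b) = α b * α a) := by
  by_cases hcomm : ∀ a b : k, a * b = b * a
  · exact ⟨id, bijective_id, fun _ _ => rfl, hcomm⟩
  push Not at hcomm
  obtain ⟨c, x, hcx⟩ := hcomm
  have hg := PurelyLeftToRight.of_injective hbij.1 fun L hL hnL => (hpure L hL hnL).1
  obtain ⟨σ, hσ⟩ := hg.exists_surjective_ringHom (c := c) (x := x) hcx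
  exact ⟨unop ∘ σ, unop_bijective.comp ⟨σ.injective, hσ⟩, fun a b => by simp,
    fun a b => by simp⟩

/-- Lemma 8 (antiaut): if a bijection of `k²` takes affine lines to affine lines and
every purely left affine line to a purely right one, then `k` has an anti-automorphism. -/
theorem stmt_12 [DivisionRing k] (f : k × k → k × k)
    (hbij : Function.Bijective f)
    (hline : ∀ L : Set (k × k), (IsLeftAffLine L ∨ IsRightAffLine L) →
      (IsLeftAffLine (f '' L) ∨ IsRightAffLine (f '' L)))
    (hpure : ∀ L : Set (k × k), IsLeftAffLine L → ¬ IsRightAffLine L →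
      (IsRightAffLine (f '' L) ∧ ¬ IsLeftAffLine (f '' L))) :
    ∃ α : k → k, Function.Bijective α ∧ (∀ a b : k, α (a + b) = α a + α b) ∧
      (∀ a b : k, α (a * b) = α b * α a) :=
  stmt_12_general f hbij hpure
end

section
/- Let k be a division ring, n ≥ 2, and f : k^n → k^n a bijection with f(0) = 0 that takes left vector lines to right vector lines. If x, y ∈ k^n are left linearly independent, then f(x) and f(y) are right linearly independent. -/
/-- If a bijection of `k^n` (`n ≥ 2`) fixing `0` takes left vector lines to right
vector lines, then it takes left linearly independent pairs to right linearly
independent pairs. -/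
theorem stmt_15 {k : Type*} [DivisionRing k] {n : ℕ} (hn : 2 ≤ n)
    (f : (Fin n → k) → (Fin n → k)) (hbij : Function.Bijective f) (h0 : f 0 = 0)
    (hline : ∀ v : Fin n → k, v ≠ 0 → ∃ w : Fin n → k, w ≠ 0 ∧
      f '' Set.range (fun c : k => c • v) = Set.range (fun c : k => fun i => w i * c))
    (x y : Fin n → k) (hxy : LinearIndependent k ![x, y]) :
    LinearIndependent kᵐᵒᵖ ![f x, f y] := by
  rw [linearIndependent_fin2] at hxy ⊢
  simp only [Matrix.cons_val_zero, Matrix.cons_val_one, Matrix.head_cons] at hxy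
  obtain ⟨hy, hax⟩ := hxy
  have hy0 : f y ≠ 0 := fun h => hy (hbij.injective (h.trans h0.symm))
  refine ⟨hy0, ?_⟩
  intro a ha
  simp only [Matrix.cons_val_zero, Matrix.cons_val_one, Matrix.head_cons] at ha
  obtain ⟨w, hw, hwl⟩ := hline y hy
  have h1 : f y ∈ f '' Set.range (fun c : k => c • y) := ⟨y, ⟨1, one_smul _ _⟩, rfl⟩
  rw [hwl] at h1
  obtain ⟨c₀, hc₀⟩ := h1
  have h2 : f x ∈ f '' Set.range (fun c : k => c • y) := by
    rw [hwl]
    refine ⟨c₀ * a.unop, ?_⟩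
    funext i
    have h3 : f x i = f y i * a.unop := by
      rw [← ha]; rfl
    have h4 : f y i = w i * c₀ := by
      rw [← hc₀]
    simp [h3, h4, mul_assoc]
  obtain ⟨z, ⟨c, hc⟩, hz⟩ := h2
  exact hax c (by rw [show c • y = z from hc, hbij.injective hz])
end

section
/- Let k be a division ring and P a left affine 2-plane in k^n containing two distinct right affine lines through a common point. Then P is two-sided (i.e., P is also a right affine subspace). -/
open Function Set

variable {k : Type*}

/-!
Recentre everything at the common point `x`: then `P = x + S` for a left plane `S`, and the two
lines are `x + R`, `x + R'` for distinct right lines `R, R' ⊆ S`. The left span `T` of `R ∪ R'`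
lies in `S` and is stable under right multiplication. If `T` were a left line `k u`, right
stability would give `u k ⊆ k u`, and conjugating by a nonzero coordinate of `u` upgrades this to
`k u = u k`; then `T` would equal both `R` and `R'`. So `T` is a left plane, `T = S`, and `S` is a
right subspace as well.
-/

open Submodule Module

lemma image_add_eq_image_add_of_mem {R V : Type*} [Ring R] [AddCommGroup V] [Module R V]
    (S : Submodule R V) {v x : V} (hx : x ∈ (v + ·) '' (S : Set V)) :
    (v + ·) '' (S : Set V) = (x + ·) '' (S : Set V) := by
  obtain ⟨s₀, hs₀, rfl⟩ := hx
  ext y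
  constructor
  · rintro ⟨s, hs, rfl⟩
    exact ⟨s - s₀, sub_mem hs hs₀, by dsimp only; abel⟩
  · rintro ⟨s, hs, rfl⟩
    exact ⟨s₀ + s, add_mem hs₀ hs, by dsimp only; abel⟩

section AffineSubspaces

variable [DivisionRing k] {n d : ℕ} {A : Set (Fin n → k)} {x : Fin n → k}

lemma HasDimL.exists_eq_image_add (h : HasDimL A d) (hx : x ∈ A) :
    ∃ S : Submodule k (Fin n → k), A = (x + ·) '' (S : Set (Fin n → k)) ∧ finrank k S = d := by
  obtain ⟨v, S, rfl, hS⟩ := h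
  exact ⟨S, image_add_eq_image_add_of_mem S hx, hS⟩

lemma HasDimR.exists_eq_image_add (h : HasDimR A d) (hx : x ∈ A) :
    ∃ S : Submodule kᵐᵒᵖ (Fin n → k),
      A = (x + ·) '' (S : Set (Fin n → k)) ∧ finrank kᵐᵒᵖ S = d := by
  obtain ⟨v, S, rfl, hS⟩ := h
  exact ⟨S, image_add_eq_image_add_of_mem S hx, hS⟩

end AffineSubspaces

lemma Submodule.smul_mem_span_of_forall_smul_mem {R M α : Type*} [Semiring R]
    [AddCommMonoid M] [Module R M] [Monoid α] [DistribMulAction α M] [SMulCommClass α R M]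
    {s : Set M} (hs : ∀ a : α, ∀ z ∈ s, a • z ∈ s) (a : α) {z : M} (hz : z ∈ span R s) :
    a • z ∈ span R s := by
  induction hz using span_induction with
  | mem y hy => exact subset_span (hs a y hy)
  | zero => simp
  | add y w _ _ hy hw => simpa [smul_add] using add_mem hy hw
  | smul b y _ hy => simpa [smul_comm a b y] using smul_mem _ b hy

section Bimodule

variable {ι : Type*} [DivisionRing k]

theorem coe_span_singleton_eq_op_of_smul_mem {u : ι → k} (hu : u ≠ 0)
    (h : ∀ c : kᵐᵒᵖ, c • u ∈ k ∙ u) :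
    ((k ∙ u : Submodule k (ι → k)) : Set (ι → k)) = (kᵐᵒᵖ ∙ u : Submodule kᵐᵒᵖ (ι → k)) := by
  obtain ⟨i, hi⟩ : ∃ i, u i ≠ 0 := Function.ne_iff.mp hu
  ext z
  simp only [SetLike.mem_coe]
  constructor
  · intro hz
    obtain ⟨a, rfl⟩ := mem_span_singleton.mp hz
    -- `u` times the conjugate `(u i)⁻¹ * a * u i` is a left multiple `b • u`, and reading off
    -- coordinate `i` shows `b = a`.
    set c := (u i)⁻¹ * a * u i
    obtain ⟨b, hb⟩ := mem_span_singleton.mp (h (MulOpposite.op c))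
    have hbi : b * u i = u i * c := congrFun hb i
    have hba : b = a := mul_right_cancel₀ hi <| by
      rw [hbi, ← mul_assoc, ← mul_assoc, mul_inv_cancel₀ hi, one_mul]
    rw [← hba, hb]
    exact smul_mem _ _ (mem_span_singleton_self u)
  · intro hz
    obtain ⟨c, rfl⟩ := mem_span_singleton.mp hz
    exact h c

variable [Finite ι]

theorem coe_eq_of_finrank_le_one {T : Submodule k (ι → k)} (hT : finrank k T ≤ 1)
    (hTr : ∀ c : kᵐᵒᵖ, ∀ z ∈ T, c • z ∈ T) {R : Submodule kᵐᵒᵖ (ι → k)}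
    (hR : finrank kᵐᵒᵖ R = 1) (hRT : (R : Set (ι → k)) ⊆ T) :
    (T : Set (ι → k)) = R := by
  obtain ⟨u, huR, hu0⟩ := R.ne_bot_iff.mp (by rintro rfl; simp at hR)
  have huT : u ∈ T := hRT huR
  have hT1 : finrank k T = 1 := le_antisymm hT <| by
    simpa [finrank_span_singleton hu0] using
      finrank_mono (span_le.mpr (singleton_subset_iff.mpr huT))
  have hTu : T = k ∙ u := eq_span_singleton_of_mem_of_finrank_eq_one hT1 huT hu0
  rw [hTu, eq_span_singleton_of_mem_of_finrank_eq_one hR huR hu0]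
  exact coe_span_singleton_eq_op_of_smul_mem hu0 fun c => hTu ▸ hTr c u huT

end Bimodule

/-- A left affine 2-plane containing two distinct right affine lines through a common
point is two-sided. -/
theorem stmt_16 [DivisionRing k] {n : ℕ} (P : Set (Fin n → k)) (hP : HasDimL P 2)
    (L L' : Set (Fin n → k)) (hL : HasDimR L 1) (hL' : HasDimR L' 1) (hne : L ≠ L')
    (x : Fin n → k) (hxL : x ∈ L) (hxL' : x ∈ L') (hLP : L ⊆ P) (hL'P : L' ⊆ P) :
    IsRightAff P := by
  obtain ⟨S, rfl, hS⟩ := hP.exists_eq_image_add (hLP hxL)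
  obtain ⟨R, rfl, hR⟩ := hL.exists_eq_image_add hxL
  obtain ⟨R', rfl, hR'⟩ := hL'.exists_eq_image_add hxL'
  have hRS := (image_subset_image_iff (add_right_injective x)).mp hLP
  have hR'S := (image_subset_image_iff (add_right_injective x)).mp hL'P
  set T := span k ((R : Set (Fin n → k)) ∪ R')
  have hTr : ∀ c : kᵐᵒᵖ, ∀ z ∈ T, c • z ∈ T :=
    smul_mem_span_of_forall_smul_mem <| by
      rintro c z (hz | hz)
      exacts [Or.inl (R.smul_mem c hz), Or.inr (R'.smul_mem c hz)]
  have hTS : T = S := by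
    by_contra hTS
    have hlt : finrank k T < 2 :=
      hS ▸ finrank_lt_finrank_of_lt (lt_of_le_of_ne (span_le.mpr (union_subset hRS hR'S)) hTS)
    refine hne ?_
    rw [← coe_eq_of_finrank_le_one (by omega) hTr hR (subset_union_left.trans subset_span),
      ← coe_eq_of_finrank_le_one (by omega) hTr hR' (subset_union_right.trans subset_span)]
  exact ⟨x, { S.toAddSubmonoid with smul_mem' := hTS ▸ hTr }, rfl⟩
end

section
/- Let k be a division ring, f : k² → k² an additive bijection with f(0)=0 taking left vector lines to right vector lines. For each nonzero v ∈ k² define α_v : k → k by f(c·v) = f(v)·α_v(c). Then α_v is independent of v: α_v = α_w for all nonzero v, w ∈ k². -/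
private lemma stmt_17_smul {k : Type*} [DivisionRing k] (c : k) (v : k × k) :
    c • v = (c * v.1, c * v.2) := rfl

private lemma stmt_17_aux {k : Type*} [DivisionRing k] (f : k × k → k × k)
    (hinj : Function.Injective f) (h0 : f 0 = 0)
    (hadd : ∀ x y : k × k, f (x + y) = f x + f y)
    (hline : ∀ v : k × k, v ≠ 0 → ∃ w : k × k, w ≠ 0 ∧
      f '' Set.range (fun c : k => c • v)
        = Set.range (fun c : k => ((w.1 * c, w.2 * c) : k × k)))
    (α : k × k → k → k)
    (hα : ∀ v : k × k, v ≠ 0 → ∀ c : k,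
      f (c • v) = ((f v).1 * α v c, (f v).2 * α v c))
    (v w : k × k) (hv : v ≠ 0) (hw : w ≠ 0)
    (hind : ∀ c : k, w ≠ c • v) : α v = α w := by
  have hfne : ∀ x : k × k, x ≠ 0 → f x ≠ 0 := fun x hx h => hx (hinj (h.trans h0.symm))
  funext c
  have hvw : v + w ≠ 0 := by
    intro h
    exact hind (-1) (by rw [neg_one_smul]; exact eq_neg_of_add_eq_zero_right h)
  set a := α (v + w) c with ha
  set b := α v c with hb
  set d := α w c with hd
  have eq1 : f (c • (v + w)) = f (c • v) + f (c • w) := by rw [smul_add, hadd]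
  rw [hα _ hvw, hα _ hv, hα _ hw, hadd] at eq1
  have e1 : ((f v).1 + (f w).1) * a = (f v).1 * b + (f w).1 * d := by
    have := congrArg Prod.fst eq1
    simpa using this
  have e2 : ((f v).2 + (f w).2) * a = (f v).2 * b + (f w).2 * d := by
    have := congrArg Prod.snd eq1
    simpa using this
  have e1' : (f v).1 * (b - a) = (f w).1 * (a - d) := by
    rw [mul_sub, mul_sub, sub_eq_sub_iff_add_eq_add]
    rw [add_mul] at e1
    rw [← e1, add_comm]
  have e2' : (f v).2 * (b - a) = (f w).2 * (a - d) := by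
    rw [mul_sub, mul_sub, sub_eq_sub_iff_add_eq_add]
    rw [add_mul] at e2
    rw [← e2, add_comm]
  have key : b - a = 0 := by
    by_contra hba
    have cancel : ∀ x y : k, x * (b - a) = y * (a - d) →
        x = y * ((a - d) * (b - a)⁻¹) := by
      intro x y h
      have := congrArg (fun t => t * (b - a)⁻¹) h
      simpa [mul_assoc, mul_inv_cancel₀ hba] using this
    set s := (a - d) * (b - a)⁻¹ with hs
    have hfv : f v = ((f w).1 * s, (f w).2 * s) :=
      Prod.ext (cancel _ _ e1') (cancel _ _ e2')
    obtain ⟨u, hu0, hurange⟩ := hline w hw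
    have hfw_mem : f w ∈ Set.range (fun c : k => ((u.1 * c, u.2 * c) : k × k)) := by
      rw [← hurange]; exact ⟨w, ⟨1, one_smul _ _⟩, rfl⟩
    obtain ⟨t, ht⟩ := hfw_mem
    have ht1 : (f w).1 = u.1 * t := by rw [← ht]
    have ht2 : (f w).2 = u.2 * t := by rw [← ht]
    have hfv_mem : f v ∈ Set.range (fun c : k => ((u.1 * c, u.2 * c) : k × k)) :=
      ⟨t * s, by simp [hfv, ht1, ht2, mul_assoc, Prod.ext_iff]⟩
    rw [← hurange] at hfv_mem
    obtain ⟨x, ⟨e, hex⟩, hfx⟩ := hfv_mem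
    have hxv : x = v := hinj hfx
    have hve : v = e • w := by rw [← hxv, ← hex]
    have he0 : e ≠ 0 := by
      rintro rfl
      rw [zero_smul] at hve
      exact hv hve
    refine hind e⁻¹ ?_
    rw [hve, smul_smul, inv_mul_cancel₀ he0, one_smul]
  have had : a - d = 0 := by
    by_contra had
    have h1 : (f w).1 = 0 := by
      rw [key, mul_zero] at e1'
      rcases mul_eq_zero.mp e1'.symm with h | h
      · exact h
      · exact absurd h had
    have h2 : (f w).2 = 0 := by
      rw [key, mul_zero] at e2'
      rcases mul_eq_zero.mp e2'.symm with h | h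
      · exact h
      · exact absurd h had
    exact hfne w hw (Prod.ext h1 h2)
  have hba : b = a := sub_eq_zero.mp key
  have had' : a = d := sub_eq_zero.mp had
  exact hba.trans had'

/-- In the proof of Lemma 8: for an additive bijection `f` of `k²` fixing `0` and
taking left vector lines to right vector lines, the maps `α_v` defined by
`f(c·v) = f(v)·α_v(c)` coincide for all nonzero `v`. -/
theorem stmt_17 {k : Type*} [DivisionRing k] (f : k × k → k × k)
    (hbij : Function.Bijective f) (h0 : f 0 = 0)
    (hadd : ∀ x y : k × k, f (x + y) = f x + f y)
    (hline : ∀ v : k × k, v ≠ 0 → ∃ w : k × k, w ≠ 0 ∧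
      f '' Set.range (fun c : k => c • v)
        = Set.range (fun c : k => ((w.1 * c, w.2 * c) : k × k)))
    (α : k × k → k → k)
    (hα : ∀ v : k × k, v ≠ 0 → ∀ c : k,
      f (c • v) = ((f v).1 * α v c, (f v).2 * α v c)) :
    ∀ v w : k × k, v ≠ 0 → w ≠ 0 → α v = α w := by
  intro v w hv hw
  have hinj := hbij.injective
  by_cases hdep : ∃ c : k, w = c • v
  · obtain ⟨t, ht⟩ := hdep
    have ht0 : t ≠ 0 := by
      rintro rfl
      rw [zero_smul] at ht
      exact hw ht
    have hex : ∃ u : k × k, u ≠ 0 ∧ ∀ c : k, u ≠ c • v := by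
      by_cases h : v.1 = 0
      · refine ⟨(1, 0), by simp [Prod.ext_iff], fun c hc => ?_⟩
        rw [stmt_17_smul, Prod.ext_iff] at hc
        simp only [h, mul_zero] at hc
        exact one_ne_zero hc.1
      · refine ⟨(0, 1), by simp [Prod.ext_iff], fun c hc => ?_⟩
        rw [stmt_17_smul, Prod.ext_iff] at hc
        obtain ⟨h1, h2⟩ := hc
        have hc0 : c = 0 := by
          rcases mul_eq_zero.mp h1.symm with h' | h'
          exacts [h', absurd h' h]
        rw [hc0] at h2
        simp at h2
    obtain ⟨u, hu0, hindvu⟩ := hex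
    have hindwu : ∀ c : k, u ≠ c • w := by
      intro c hc
      rw [ht, smul_smul] at hc
      exact hindvu (c * t) hc
    have h1 : α v = α u := stmt_17_aux f hinj h0 hadd hline α hα v u hv hu0 hindvu
    have h2 : α w = α u := stmt_17_aux f hinj h0 hadd hline α hα w u hw hu0 hindwu
    rw [h1, h2]
  · push_neg at hdep
    exact stmt_17_aux f hinj h0 hadd hline α hα v w hv hw hdep
end

section
/- Let k be a division ring and n ≥ 2. Suppose M is an invertible n×n matrix over k such that x ↦ xM maps every left k-subspace of k^n to a left k-subspace and every right k-subspace to a right k-subspace (rows of k^n). Then M = aM' for some nonzero a ∈ k and some invertible matrix M' with all entries in the center Z(k). -/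
/-!
If `v` has central entries, the right line through `v` is also the left line through `v`, so the
hypothesis on right subspaces says that every right multiple `(v M) d` is a left multiple
`c (v M)`. For a row `M i` with a nonzero entry `b` this forces `c = b d b⁻¹`, i.e.
`M i l * d = b d b⁻¹ * M i l` for all `l` and `d`. Applied to `M i + M i'`, left independence of
distinct rows shows that the inner automorphisms `d ↦ b d b⁻¹` of all rows coincide. So if `a` is
a nonzero entry of one fixed row, every entry of `a⁻¹ M` commutes with every `d`.
-/

open Matrix MulOpposite

section

variable {k : Type*} [DivisionRing k]

def RightMultiplesAreLeftMultiples {ι : Type*} (w : ι → k) : Prop :=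
  ∀ d : k, ∃ c : k, c • w = op d • w

theorem inv_mul_mem_center_of_forall_mul_eq {a x : k} (ha : a ≠ 0)
    (h : ∀ d, x * d = a * d * a⁻¹ * x) : a⁻¹ * x ∈ Subring.center k := by
  rw [Subring.mem_center_iff]
  intro d
  calc d * (a⁻¹ * x) = a⁻¹ * (a * d * a⁻¹ * x) := by
        simp only [mul_assoc, inv_mul_cancel_left₀ ha]
    _ = a⁻¹ * x * d := by rw [← h, mul_assoc]

namespace RightMultiplesAreLeftMultiples

variable {ι : Type*}

theorem mul_eq_conj_mul {w : ι → k} (hw : RightMultiplesAreLeftMultiples w) {j : ι}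
    (hj : w j ≠ 0) (d : k) (l : ι) : w l * d = w j * d * (w j)⁻¹ * w l := by
  obtain ⟨c, hc⟩ := hw d
  have hcl : ∀ l, c * w l = w l * d := fun l => congrFun hc l
  have hc_eq : c = w j * d * (w j)⁻¹ := by rw [← hcl j, mul_inv_cancel_right₀ hj]
  rw [← hc_eq, hcl]

theorem conj_eq_conj_of_add {u v : ι → k} (hu : RightMultiplesAreLeftMultiples u)
    (hv : RightMultiplesAreLeftMultiples v) (huv : RightMultiplesAreLeftMultiples (u + v))
    (hind : ∀ a b : k, a • u + b • v = 0 → a = 0 ∧ b = 0) {j j' : ι} (hj : u j ≠ 0)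
    (hj' : v j' ≠ 0) (d : k) : u j * d * (u j)⁻¹ = v j' * d * (v j')⁻¹ := by
  obtain ⟨c, hc⟩ := huv d
  have hdep : (c - u j * d * (u j)⁻¹) • u + (c - v j' * d * (v j')⁻¹) • v = 0 := by
    ext l
    have hcl : c * (u l + v l) = (u l + v l) * d := congrFun hc l
    simp only [Pi.add_apply, Pi.smul_apply, smul_eq_mul, sub_mul, Pi.zero_apply,
      ← hu.mul_eq_conj_mul hj d l, ← hv.mul_eq_conj_mul hj' d l]
    rw [sub_add_sub_comm, ← mul_add, hcl, add_mul, sub_self]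
  obtain ⟨h₁, h₂⟩ := hind _ _ hdep
  rw [sub_eq_zero] at h₁ h₂
  rw [← h₁, ← h₂]

end RightMultiplesAreLeftMultiples

theorem rightMultiplesAreLeftMultiples_vecMul {m n : Type*} [Fintype m] {M : Matrix m n k}
    {v : m → k} (hv : ∀ i, v i ∈ Subring.center k)
    (hM : ∃ T : Submodule kᵐᵒᵖ (n → k),
      (fun x => x ᵥ* M) '' (Submodule.span kᵐᵒᵖ {v} : Set (m → k)) = T) :
    RightMultiplesAreLeftMultiples (v ᵥ* M) := by
  intro d
  obtain ⟨T, hT⟩ := hM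
  have hvM : v ᵥ* M ∈ T := by
    rw [← SetLike.mem_coe, ← hT]
    exact ⟨v, Submodule.mem_span_singleton_self v, rfl⟩
  obtain ⟨x, hx, hxd⟩ : op d • v ᵥ* M ∈ (fun x => x ᵥ* M) '' (Submodule.span kᵐᵒᵖ {v}) := by
    rw [hT]
    exact T.smul_mem (op d) hvM
  obtain ⟨c, rfl⟩ := Submodule.mem_span_singleton.1 hx
  have hcv : c • v = c.unop • v := funext fun l => ((Subring.mem_center_iff.1 (hv l)) _).symm
  exact ⟨c.unop, by rw [← hxd, hcv]; exact (smul_vecMul _ _ _).symm⟩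

theorem exists_inv_mul_mem_center {m n : Type*} [Fintype m] [DecidableEq m] [Nonempty m]
    {M : Matrix m n k} (hM : Function.Injective M.vecMul)
    (hstable : ∀ v : m → k, (∀ i, v i ∈ Subring.center k) →
      RightMultiplesAreLeftMultiples (v ᵥ* M)) :
    ∃ a : k, a ≠ 0 ∧ ∀ i j, a⁻¹ * M i j ∈ Subring.center k := by
  have hsingle : ∀ i l, (Pi.single i 1 : m → k) l ∈ Subring.center k := fun i l => by
    rcases eq_or_ne l i with rfl | h
    · simp
    · simp [h]
  have hrow : ∀ i, RightMultiplesAreLeftMultiples (M i) := fun i => by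
    have h := hstable _ (hsingle i)
    rwa [single_one_vecMul] at h
  have hsum : ∀ i i', RightMultiplesAreLeftMultiples (M i + M i') := fun i i' => by
    have h := hstable (Pi.single i 1 + Pi.single i' 1) fun l =>
      Subring.add_mem _ (hsingle i l) (hsingle i' l)
    rwa [add_vecMul, single_one_vecMul, single_one_vecMul] at h
  have hind : ∀ i i', i ≠ i' → ∀ a b : k, a • M i + b • M i' = 0 → a = 0 ∧ b = 0 := by
    intro i i' h a b hab
    have hzero : Pi.single i a + Pi.single i' b = (0 : m → k) :=
      hM (by dsimp only; rwa [add_vecMul, single_vecMul, single_vecMul, zero_vecMul])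
    exact ⟨by simpa [h] using congrFun hzero i, by simpa [h.symm] using congrFun hzero i'⟩
  have hpivot : ∀ i, ∃ j, M i j ≠ 0 := by
    intro i
    by_contra! h
    have hzero : Pi.single i 1 = (0 : m → k) :=
      hM (by ext j; simpa [single_one_vecMul] using h j)
    simpa using congrFun hzero i
  choose p hp using hpivot
  obtain ⟨i₀⟩ := ‹Nonempty m›
  have hconj : ∀ i d, M i (p i) * d * (M i (p i))⁻¹ = M i₀ (p i₀) * d * (M i₀ (p i₀))⁻¹ := by
    intro i d
    rcases eq_or_ne i i₀ with rfl | hi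
    · rfl
    exact (hrow i).conj_eq_conj_of_add (hrow i₀) (hsum i i₀) (hind i i₀ hi) (hp i) (hp i₀) d
  refine ⟨M i₀ (p i₀), hp i₀, fun i j => inv_mul_mem_center_of_forall_mul_eq (hp i₀) fun d => ?_⟩
  rw [(hrow i).mul_eq_conj_mul (hp i) d j, hconj]

end

theorem stmt_18_general {k : Type*} [DivisionRing k] {n : ℕ} (hn : 2 ≤ n)
    (M : Matrix (Fin n) (Fin n) k) (hM : IsUnit M)
    (hright : ∀ S : Submodule kᵐᵒᵖ (Fin n → k), ∃ T : Submodule kᵐᵒᵖ (Fin n → k),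
      (fun x : Fin n → k => Matrix.vecMul x M) '' (S : Set (Fin n → k))
        = (T : Set (Fin n → k))) :
    ∃ (a : k) (M' : Matrix (Fin n) (Fin n) k), a ≠ 0 ∧ IsUnit M' ∧
      (∀ i j, M' i j ∈ Subring.center k) ∧ M = a • M' := by
  have : Nonempty (Fin n) := ⟨⟨0, by omega⟩⟩
  obtain ⟨a, ha, hcenter⟩ := exists_inv_mul_mem_center (vecMul_injective_of_isUnit hM)
    fun v hv => rightMultiplesAreLeftMultiples_vecMul hv (hright _)
  refine ⟨a, a⁻¹ • M, ha, ?_, hcenter, ?_⟩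
  · rw [smul_eq_diagonal_mul]
    exact ((isUnit_iff_ne_zero.2 (inv_ne_zero ha)).map (scalar (Fin n))).mul hM
  · rw [smul_smul, mul_inv_cancel₀ ha, one_smul]

/-- If an invertible matrix `M` over `k` is such that `x ↦ xM` takes left subspaces to
left subspaces and right subspaces to right subspaces of `k^n` (`n ≥ 2`), then
`M = a M'` with `a ≠ 0` and `M'` an invertible matrix over the center of `k`. -/
theorem stmt_18 {k : Type*} [DivisionRing k] {n : ℕ} (hn : 2 ≤ n)
    (M : Matrix (Fin n) (Fin n) k) (hM : IsUnit M)
    (hleft : ∀ S : Submodule k (Fin n → k), ∃ T : Submodule k (Fin n → k),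
      (fun x : Fin n → k => Matrix.vecMul x M) '' (S : Set (Fin n → k))
        = (T : Set (Fin n → k)))
    (hright : ∀ S : Submodule kᵐᵒᵖ (Fin n → k), ∃ T : Submodule kᵐᵒᵖ (Fin n → k),
      (fun x : Fin n → k => Matrix.vecMul x M) '' (S : Set (Fin n → k))
        = (T : Set (Fin n → k))) :
    ∃ (a : k) (M' : Matrix (Fin n) (Fin n) k), a ≠ 0 ∧ IsUnit M' ∧
      (∀ i j, M' i j ∈ Subring.center k) ∧ M = a • M' :=
  stmt_18_general hn M hM hright
end
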